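/- arXiv:2105.10743 — 3 statements merged into one kernel-verified Lean document; each statement's English description precedes it below -/
import Mathlib

section
/- In a random game G(2,n) with n ≥ 1, for every k ∈ {1,…,n}, the probability that Column has exactly k strictly undominated actions equals s(n,k)/n!, where s(n,k) is the unsigned Stirling number of the first kind. -/
open Finset Filter

noncomputable section

/-- Row action `i` is strictly dominated in the restricted game with Row actions `X`
and Column actions `Y`, for Row payoff matrix `R`. -/
def RowDomIn {m n : ℕ} (R : Fin m → Fin n → ℝ) (X : Finset (Fin m)) (Y : Finset (Fin n))
    (i : Fin m) : Prop :=
  ∃ i' ∈ X, ∀ j ∈ Y, R i j < R i' j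

/-- Column action `j` is strictly dominated in the restricted game with Row actions `X`
and Column actions `Y`, for Column payoff matrix `C`. -/
def ColDomIn {m n : ℕ} (C : Fin m → Fin n → ℝ) (X : Finset (Fin m)) (Y : Finset (Fin n))
    (j : Fin n) : Prop :=
  ∃ j' ∈ Y, ∀ i ∈ X, C i j < C i j'

open Classical in
/-- One round of iterated elimination: simultaneously delete every strictly dominated
action of both players in the current restricted game. -/
def elimStep {m n : ℕ} (R C : Fin m → Fin n → ℝ)
    (p : Finset (Fin m) × Finset (Fin n)) : Finset (Fin m) × Finset (Fin n) :=
  (p.1.filter fun i => ¬ RowDomIn R p.1 p.2 i,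
   p.2.filter fun j => ¬ ColDomIn C p.1 p.2 j)

/-- Surviving actions of the subgame `(p.1, p.2)` after iterated elimination of strictly
dominated actions (iterating `m + n` times surely reaches the fixed point). -/
def survivorsFrom {m n : ℕ} (R C : Fin m → Fin n → ℝ)
    (p : Finset (Fin m) × Finset (Fin n)) : Finset (Fin m) × Finset (Fin n) :=
  (elimStep R C)^[m + n] p

/-- The subgame `(p.1, p.2)` is strict-dominance solvable: exactly one action of each
player survives iterated elimination of strictly dominated actions. -/
def SolvableFrom {m n : ℕ} (R C : Fin m → Fin n → ℝ)
    (p : Finset (Fin m) × Finset (Fin n)) : Prop :=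
  (survivorsFrom R C p).1.card = 1 ∧ (survivorsFrom R C p).2.card = 1

/-- Surviving actions of the full game after iterated elimination. -/
def survivors {m n : ℕ} (R C : Fin m → Fin n → ℝ) : Finset (Fin m) × Finset (Fin n) :=
  survivorsFrom R C (Finset.univ, Finset.univ)

/-- The game is strict-dominance solvable. -/
def Solvable {m n : ℕ} (R C : Fin m → Fin n → ℝ) : Prop :=
  SolvableFrom R C (Finset.univ, Finset.univ)

/-- The number of rounds performed by the iterated elimination procedure:
the least `k` such that round `k + 1` deletes nothing more. -/
def elimRounds {m n : ℕ} (R C : Fin m → Fin n → ℝ) : ℕ :=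
  sInf {k | (elimStep R C)^[k + 1] (Finset.univ, Finset.univ)
          = (elimStep R C)^[k] (Finset.univ, Finset.univ)}

/-- Sample space of the random game `G(m,n)`: for each Column action an i.i.d. uniform
permutation giving Row's ordinal payoffs in that column, and for each Row action an
i.i.d. uniform permutation giving Column's ordinal payoffs in that row. -/
abbrev Omega (m n : ℕ) := (Fin n → Equiv.Perm (Fin m)) × (Fin m → Equiv.Perm (Fin n))

/-- Row's payoff matrix of the realized game. -/
def RPay {m n : ℕ} (ω : Omega m n) : Fin m → Fin n → ℝ := fun i j => ((ω.1 j) i : ℕ)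

/-- Column's payoff matrix of the realized game. -/
def CPay {m n : ℕ} (ω : Omega m n) : Fin m → Fin n → ℝ := fun i j => ((ω.2 i) j : ℕ)

/-- Probability of an event under the uniform distribution on `Omega m n`
(i.e. all `m + n` permutations uniform and mutually independent). -/
def Pr {m n : ℕ} (E : Set (Omega m n)) : ℝ :=
  (E.toFinite.toFinset.card : ℝ) / (Fintype.card (Omega m n) : ℝ)

open Classical in
/-- Number of Row actions that are not strictly dominated. -/
def UR {m n : ℕ} (ω : Omega m n) : ℕ :=
  (Finset.univ.filter fun i => ¬ RowDomIn (RPay ω) Finset.univ Finset.univ i).card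

open Classical in
/-- Number of Column actions that are not strictly dominated. -/
def UC {m n : ℕ} (ω : Omega m n) : ℕ :=
  (Finset.univ.filter fun j => ¬ ColDomIn (CPay ω) Finset.univ Finset.univ j).card

/-- Number of Row actions surviving iterated elimination. -/
def SR {m n : ℕ} (ω : Omega m n) : ℕ := (survivors (RPay ω) (CPay ω)).1.card

/-- Number of Column actions surviving iterated elimination. -/
def SC {m n : ℕ} (ω : Omega m n) : ℕ := (survivors (RPay ω) (CPay ω)).2.card

/-- The realized game is strict-dominance solvable. -/
def GameSolvable {m n : ℕ} (ω : Omega m n) : Prop := Solvable (RPay ω) (CPay ω)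

/-- Number of rounds of the iterated elimination procedure in the realized game. -/
def GameRounds {m n : ℕ} (ω : Omega m n) : ℕ := elimRounds (RPay ω) (CPay ω)

/-- `π(m,n)`: probability that the random game `G(m,n)` is strict-dominance solvable. -/
def probSolvable (m n : ℕ) : ℝ := Pr {ω : Omega m n | GameSolvable ω}

/-- Expected number of Column's strictly undominated actions, `E[U^C(m,n)]`. -/
def expUC (m n : ℕ) : ℝ :=
  (∑ ω : Omega m n, (UC ω : ℝ)) / (Fintype.card (Omega m n) : ℝ)

/-- Expected number of Column actions surviving iterated elimination, `E[S^C(m,n)]`. -/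
def expSC (m n : ℕ) : ℝ :=
  (∑ ω : Omega m n, (SC ω : ℝ)) / (Fintype.card (Omega m n) : ℝ)

open Classical in
/-- `E[I(m,n)]`: expected number of elimination rounds conditional on the game being
strict-dominance solvable. -/
def condExpRounds (m n : ℕ) : ℝ :=
  (∑ ω : Omega m n, if GameSolvable ω then (GameRounds ω : ℝ) else 0) /
    (∑ ω : Omega m n, if GameSolvable ω then (1 : ℝ) else 0)

/-- Unsigned Stirling numbers of the first kind. -/
def stirling1 : ℕ → ℕ → ℕ
  | 0, 0 => 1
  | 0, _ + 1 => 0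
  | _ + 1, 0 => 0
  | n + 1, k + 1 => n * stirling1 n (k + 1) + stirling1 n k

end

section Aux
open Equiv


/-- right-to-left maxima positions of a permutation -/
def RL {n : ℕ} (ρ : Equiv.Perm (Fin n)) : Finset (Fin n) :=
  Finset.univ.filter fun p => ∀ q, p < q → ρ q < ρ p

lemma mem_RL {n : ℕ} {ρ : Equiv.Perm (Fin n)} {p : Fin n} :
    p ∈ RL ρ ↔ ∀ q, p < q → ρ q < ρ p := by simp [RL]

def Acount (n k : ℕ) : ℕ :=
  (Finset.univ.filter fun ρ : Equiv.Perm (Fin n) => (RL ρ).card = k).card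

def insMin {n : ℕ} (p : Fin (n+1)) (ρ : Equiv.Perm (Fin n)) : Equiv.Perm (Fin (n+1)) :=
  (finSuccEquiv' p).trans (ρ.optionCongr.trans (finSuccEquiv' 0).symm)

lemma insMin_at {n : ℕ} (p : Fin (n+1)) (ρ : Equiv.Perm (Fin n)) : insMin p ρ p = 0 := by
  simp [insMin, finSuccEquiv'_at, finSuccEquiv'_symm_none]

lemma insMin_succAbove {n : ℕ} (p : Fin (n+1)) (ρ : Equiv.Perm (Fin n)) (q : Fin n) :
    insMin p ρ (p.succAbove q) = (ρ q).succ := by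
  simp [insMin, finSuccEquiv'_succAbove, finSuccEquiv'_symm_some, Fin.zero_succAbove]

lemma RL_insMin {n : ℕ} (p : Fin (n+1)) (ρ : Equiv.Perm (Fin n)) :
    RL (insMin p ρ) = if p = Fin.last n
      then insert p ((RL ρ).map (Fin.succAboveEmb p))
      else (RL ρ).map (Fin.succAboveEmb p) := by
  have hmem : ∀ q : Fin n, p.succAbove q ∈ RL (insMin p ρ) ↔ q ∈ RL ρ := by
    intro q
    rw [mem_RL, mem_RL]
    constructor
    · intro h q' hq'
      have := h (p.succAbove q') (Fin.succAbove_lt_succAbove_iff.mpr hq')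
      rwa [insMin_succAbove, insMin_succAbove, Fin.succ_lt_succ_iff] at this
    · intro h s hs
      rcases eq_or_ne s p with rfl | hsp
      · rw [insMin_at, insMin_succAbove]; exact Fin.succ_pos _
      · obtain ⟨q', rfl⟩ := Fin.exists_succAbove_eq hsp
        rw [insMin_succAbove, insMin_succAbove, Fin.succ_lt_succ_iff]
        exact h q' (Fin.succAbove_lt_succAbove_iff.mp hs)
  have hp : p ∈ RL (insMin p ρ) ↔ p = Fin.last n := by
    rw [mem_RL]
    constructor
    · intro h
      by_contra hne
      have hlt : p < Fin.last n := Fin.lt_last_iff_ne_last.mpr hne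
      have := h (Fin.last n) hlt
      rw [insMin_at] at this
      exact Fin.not_lt_zero _ this
    · intro h q hq
      exact absurd hq (by simp [h, Fin.lt_last_iff_ne_last, Fin.le_last])
  ext r
  rcases eq_or_ne r p with rfl | hrp
  · simp only [hp]
    split_ifs with h
    · simp [h, Finset.mem_insert]
    · simp only [Finset.mem_map, Fin.succAboveEmb_apply]
      constructor
      · intro hh; exact absurd hh h
      · rintro ⟨q, _, hq⟩; exact absurd hq (Fin.succAbove_ne r q)
  · obtain ⟨q, rfl⟩ := Fin.exists_succAbove_eq hrp
    have himg : p.succAbove q ∈ (RL ρ).map (Fin.succAboveEmb p) ↔ q ∈ RL ρ := by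
      simp only [Finset.mem_map, Fin.succAboveEmb_apply]
      constructor
      · rintro ⟨q', hq', he⟩
        rwa [← Fin.succAbove_right_injective (p := p) he]
      · intro h; exact ⟨q, h, rfl⟩
    rw [hmem]
    split_ifs with h
    · rw [Finset.mem_insert, himg]
      simp [(Fin.succAbove_ne p q)]
    · exact himg.symm

lemma card_RL_insMin {n : ℕ} (p : Fin (n+1)) (ρ : Equiv.Perm (Fin n)) :
    (RL (insMin p ρ)).card = (RL ρ).card + (if p = Fin.last n then 1 else 0) := by
  rw [RL_insMin]
  split_ifs with h
  · rw [Finset.card_insert_of_notMem, Finset.card_map, Nat.add_comm]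
    simp only [Finset.mem_map, Fin.succAboveEmb_apply]
    rintro ⟨q, _, hq⟩
    exact Fin.succAbove_ne p q hq
  · rw [Finset.card_map, Nat.add_zero]

lemma insMin_injective {n : ℕ} :
    Function.Injective (fun x : Fin (n+1) × Equiv.Perm (Fin n) => insMin x.1 x.2) := by
  rintro ⟨p, ρ⟩ ⟨p', ρ'⟩ h
  simp only at h
  have hp : p = p' := by
    have h1 : insMin p ρ p = 0 := insMin_at p ρ
    have h2 : insMin p' ρ' p' = 0 := insMin_at p' ρ'
    rw [h] at h1
    exact (insMin p' ρ').injective (h1.trans h2.symm)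
  subst hp
  have hρ : ρ = ρ' := by
    ext q
    have := congrArg (fun e : Equiv.Perm (Fin (n+1)) => e (p.succAbove q)) h
    simp only [insMin_succAbove] at this
    exact Fin.val_eq_of_eq (Fin.succ_injective _ this)
  rw [hρ]

noncomputable def insMinEquiv (n : ℕ) : Fin (n+1) × Equiv.Perm (Fin n) ≃ Equiv.Perm (Fin (n+1)) :=
  Equiv.ofBijective _ ((Fintype.bijective_iff_injective_and_card
    (fun x : Fin (n+1) × Equiv.Perm (Fin n) => insMin x.1 x.2)).mpr
    ⟨insMin_injective, by
      simp [Fintype.card_perm, Nat.factorial_succ]⟩)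

lemma sum_ite_last {n : ℕ} (a b : ℕ) :
    (∑ p : Fin (n+1), if p = Fin.last n then a else b) = n * b + a := by
  classical
  rw [← Finset.sum_filter_add_sum_filter_not Finset.univ (· = Fin.last n)]
  rw [Finset.filter_eq' Finset.univ (Fin.last n), if_pos (Finset.mem_univ _)]
  have : Finset.filter (fun p => ¬ p = Fin.last n) Finset.univ
      = (Finset.univ : Finset (Fin (n+1))).erase (Fin.last n) := by
    ext x; simp [Finset.mem_erase, and_comm]
  rw [this]
  have hs : ∀ p ∈ (Finset.univ : Finset (Fin (n+1))).erase (Fin.last n),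
      (if p = Fin.last n then a else b) = b := by
    intro p hp; rw [if_neg (Finset.mem_erase.mp hp).1]
  rw [Finset.sum_congr rfl hs, Finset.sum_const, Finset.sum_singleton, if_pos rfl,
    Finset.card_erase_of_mem (Finset.mem_univ _), Finset.card_univ, Fintype.card_fin]
  simp [Nat.add_comm, Nat.mul_comm]

lemma Acount_succ_aux (n k : ℕ) :
    Acount (n+1) k = ∑ p : Fin (n+1),
      (Finset.univ.filter fun ρ : Equiv.Perm (Fin n) =>
        (RL ρ).card + (if p = Fin.last n then 1 else 0) = k).card := by
  classical
  have h1 : Acount (n+1) k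
      = (Finset.univ.filter fun x : Fin (n+1) × Equiv.Perm (Fin n) =>
          (RL (insMin x.1 x.2)).card = k).card := by
    rw [Acount, ← Fintype.card_subtype, ← Fintype.card_subtype]
    exact Fintype.card_congr ((Equiv.subtypeEquiv (insMinEquiv n) (fun x => Iff.rfl)).symm)
  rw [h1, Finset.card_filter, Fintype.sum_prod_type]
  refine Finset.sum_congr rfl (fun p _ => ?_)
  rw [Finset.card_filter]
  refine Finset.sum_congr rfl (fun ρ _ => ?_)
  rw [card_RL_insMin]

lemma Acount_succ_zero (n : ℕ) : Acount (n+1) 0 = n * Acount n 0 := by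
  classical
  rw [Acount_succ_aux]
  have h : ∀ p : Fin (n+1),
      (Finset.univ.filter fun ρ : Equiv.Perm (Fin n) =>
        (RL ρ).card + (if p = Fin.last n then 1 else 0) = 0).card
      = if p = Fin.last n then 0 else Acount n 0 := by
    intro p
    split_ifs with hp
    · simp [hp]
    · simp only [hp, if_false, Nat.add_zero]; rfl
  rw [Finset.sum_congr rfl (fun p _ => h p), sum_ite_last, Nat.add_zero]

lemma Acount_succ_succ (n k : ℕ) :
    Acount (n+1) (k+1) = n * Acount n (k+1) + Acount n k := by
  classical
  rw [Acount_succ_aux]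
  have h : ∀ p : Fin (n+1),
      (Finset.univ.filter fun ρ : Equiv.Perm (Fin n) =>
        (RL ρ).card + (if p = Fin.last n then 1 else 0) = k + 1).card
      = if p = Fin.last n then Acount n k else Acount n (k+1) := by
    intro p
    split_ifs with hp
    · rw [Acount, Finset.card_filter, Finset.card_filter]
      refine Finset.sum_congr rfl (fun ρ _ => ?_)
      simp
    · simp only [hp, if_false, Nat.add_zero]; rfl
  rw [Finset.sum_congr rfl (fun p _ => h p), sum_ite_last]


lemma Acount_zero (k : ℕ) : Acount 0 k = if k = 0 then 1 else 0 := by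
  classical
  rw [Acount]
  have hRL : ∀ ρ : Equiv.Perm (Fin 0), (RL ρ).card = 0 := by
    intro ρ
    have : RL ρ = ∅ := Finset.eq_empty_of_isEmpty _
    rw [this, Finset.card_empty]
  split_ifs with hk
  · subst hk
    rw [Finset.filter_true_of_mem (fun ρ _ => hRL ρ), Finset.card_univ, Fintype.card_perm]
    simp
  · rw [Finset.filter_false_of_mem, Finset.card_empty]
    intro ρ _
    rw [hRL]
    exact fun h => hk h.symm

lemma Acount_eq_stirling (n : ℕ) : ∀ k, Acount n k = stirling1 n k := by
  induction n with
  | zero => intro k; rw [Acount_zero]; cases k <;> simp [stirling1]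
  | succ n ih =>
    intro k
    cases k with
    | zero => rw [Acount_succ_zero, ih, stirling1]; cases n <;> simp [stirling1]
    | succ k => rw [Acount_succ_succ, ih, ih, stirling1]

lemma UC_eq {n : ℕ} (ω : Omega 2 n) :
    UC ω = (RL ((ω.2 0).symm.trans (ω.2 1))).card := by
  classical
  set σ := ω.2 0 with hσdef
  set τ := ω.2 1 with hτdef
  set ρ := σ.symm.trans τ with hρdef
  have hC : ∀ (i : Fin 2) (j j' : Fin n), CPay ω i j < CPay ω i j' ↔ (ω.2 i) j < (ω.2 i) j' := by
    intro i j j'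
    simp only [CPay]
    exact_mod_cast Iff.rfl
  have hdom : ∀ j, ColDomIn (CPay ω) Finset.univ Finset.univ j
      ↔ ∃ j', σ j < σ j' ∧ τ j < τ j' := by
    intro j
    constructor
    · rintro ⟨j', -, h⟩
      exact ⟨j', (hC 0 j j').mp (h 0 (Finset.mem_univ _)),
        (hC 1 j j').mp (h 1 (Finset.mem_univ _))⟩
    · rintro ⟨j', h1, h2⟩
      refine ⟨j', Finset.mem_univ _, ?_⟩
      intro i _
      rw [hC]
      fin_cases i
      · exact h1
      · exact h2
  have key : ∀ j, (¬ ColDomIn (CPay ω) Finset.univ Finset.univ j) ↔ σ j ∈ RL ρ := by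
    intro j
    rw [hdom, mem_RL]
    constructor
    · intro h v hv
      set j' := σ.symm v with hj'
      have hv' : σ j' = v := σ.apply_symm_apply v
      have h1 : σ j < σ j' := by rw [hv']; exact hv
      have hne : j ≠ j' := fun he => by rw [he] at h1; exact lt_irrefl _ h1
      have h2 : ¬ τ j < τ j' := fun h2 => h ⟨j', h1, h2⟩
      have : τ j' < τ j := by
        rcases lt_or_eq_of_le (not_lt.mp h2) with h' | h'
        · exact h'
        · exact absurd (τ.injective h') (Ne.symm hne)
      have e1 : ρ v = τ j' := by rw [hρdef]; simp [hj']
      have e2 : ρ (σ j) = τ j := by rw [hρdef]; simp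
      rw [e1, e2]
      exact this
    · rintro h ⟨j', h1, h2⟩
      have := h (σ j') h1
      have e1 : ρ (σ j') = τ j' := by rw [hρdef]; simp
      have e2 : ρ (σ j) = τ j := by rw [hρdef]; simp
      rw [e1, e2] at this
      exact absurd h2 (not_lt.mpr (le_of_lt this))
  rw [UC]
  refine Finset.card_bij (fun j _ => σ j) ?_ ?_ ?_
  · intro j hj
    exact (key j).mp (Finset.mem_filter.mp hj).2
  · intro a _ b _ h
    exact σ.injective h
  · intro p hp
    refine ⟨σ.symm p, ?_, σ.apply_symm_apply p⟩
    rw [Finset.mem_filter]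
    refine ⟨Finset.mem_univ _, ?_⟩
    rw [key, σ.apply_symm_apply]
    exact hp

def shearEquiv (n : ℕ) :
    (Equiv.Perm (Fin n) × Equiv.Perm (Fin n)) ≃ (Equiv.Perm (Fin n) × Equiv.Perm (Fin n)) where
  toFun x := (x.1, x.1.symm.trans x.2)
  invFun x := (x.1, x.1.trans x.2)
  left_inv x := by
    refine Prod.ext rfl ?_
    ext v
    simp
  right_inv x := by
    refine Prod.ext rfl ?_
    ext v
    simp

def ΨEquiv (n : ℕ) :
    Omega 2 n ≃ (Fin n → Equiv.Perm (Fin 2)) × (Equiv.Perm (Fin n) × Equiv.Perm (Fin n)) :=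
  Equiv.prodCongr (Equiv.refl _) ((finTwoArrowEquiv _).trans (shearEquiv n))

def prodSubtypeEquiv {α β : Type*} (Q : β → Prop) : {x : α × β // Q x.2} ≃ α × {b // Q b} where
  toFun x := (x.1.1, ⟨x.1.2, x.2⟩)
  invFun y := ⟨(y.1, y.2.1), y.2.2⟩
  left_inv x := rfl
  right_inv y := rfl

lemma card_event (n k : ℕ) :
    Nat.card {ω : Omega 2 n | UC ω = k}
      = Fintype.card (Fin n → Equiv.Perm (Fin 2)) * (n.factorial * Acount n k) := by
  classical
  have e1 : {ω : Omega 2 n | UC ω = k}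
      ≃ {x : (Fin n → Equiv.Perm (Fin 2)) × (Equiv.Perm (Fin n) × Equiv.Perm (Fin n)) //
          (RL x.2.2).card = k} :=
    Equiv.subtypeEquiv (ΨEquiv n) (fun ω => by
      have : ((ΨEquiv n) ω).2.2 = (ω.2 0).symm.trans (ω.2 1) := rfl
      rw [Set.mem_setOf_eq, this, UC_eq])
  have e2 := e1.trans ((prodSubtypeEquiv (fun y : Equiv.Perm (Fin n) × Equiv.Perm (Fin n) =>
      (RL y.2).card = k)).trans
    (Equiv.prodCongr (Equiv.refl _) (prodSubtypeEquiv (fun ρ : Equiv.Perm (Fin n) =>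
      (RL ρ).card = k))))
  rw [Nat.card_congr e2, Nat.card_prod, Nat.card_prod]
  rw [Nat.card_eq_fintype_card, Nat.card_eq_fintype_card, Nat.card_eq_fintype_card,
    Fintype.card_perm, Fintype.card_fin, Fintype.card_subtype]
  rfl

lemma pr_eq (n k : ℕ) :
    Pr {ω : Omega 2 n | UC ω = k} = (Acount n k : ℝ) / (n.factorial : ℝ) := by
  classical
  rw [Pr]
  have h1 : (({ω : Omega 2 n | UC ω = k}).toFinite.toFinset.card : ℕ)
      = Nat.card {ω : Omega 2 n | UC ω = k} := by
    rw [← Set.ncard_eq_toFinset_card _ ({ω : Omega 2 n | UC ω = k}).toFinite,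
      Nat.card_coe_set_eq]
  have h2 : Fintype.card (Omega 2 n)
      = Fintype.card (Fin n → Equiv.Perm (Fin 2)) * (n.factorial * n.factorial) := by
    rw [Fintype.card_prod]
    congr 1
    rw [Fintype.card_fun, Fintype.card_perm, Fintype.card_fin, Fintype.card_fin]
    ring
  rw [h1, card_event, h2]
  have hc : (0 : ℝ) < Fintype.card (Fin n → Equiv.Perm (Fin 2)) := by
    exact_mod_cast Fintype.card_pos
  have hf : (0 : ℝ) < n.factorial := by exact_mod_cast n.factorial_pos
  push_cast
  field_simp

end Aux

/-- In a random game `G(2,n)` with `n ≥ 1`, for every `k ∈ {1,…,n}`, the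
probability that Column has exactly `k` strictly undominated actions equals `s(n,k)/n!`. -/
theorem stmt1 (n : ℕ) (hn : 1 ≤ n) (k : ℕ) (hk : k ∈ Finset.Icc 1 n) :
    Pr {ω : Omega 2 n | UC ω = k} = (stirling1 n k : ℝ) / (Nat.factorial n : ℝ) := by
  rw [pr_eq n k, Acount_eq_stirling]
end

section
/- For every n ≥ 1, the probability that a random game G(2,n) is strict-dominance solvable equals π(2,n) = (2n−1)!!/(2^{n−1}·n!), which also equals 2·Γ(n+1/2)/(Γ(1/2)·Γ(n+1)). -/
open Finset Filter

open Finset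

noncomputable section
open Classical

/-- records (right-to-left maxima by position) of a permutation -/
def rlSet {k : ℕ} (ρ : Equiv.Perm (Fin k)) : Finset (Fin k) :=
  Finset.univ.filter fun v => ∀ w, v < w → ρ w < ρ v

def rl {k : ℕ} (ρ : Equiv.Perm (Fin k)) : ℕ := (rlSet ρ).card

lemma rl_le {k : ℕ} (ρ : Equiv.Perm (Fin k)) : rl ρ ≤ k := by
  classical
  calc rl ρ ≤ (Finset.univ : Finset (Fin k)).card := Finset.card_filter_le _ _
  _ = k := by simp

/-- remove the point p (sent to 0) from a permutation -/
def reduceAt {n : ℕ} (ρ : Equiv.Perm (Fin (n+1))) (p : Fin (n+1)) : Equiv.Perm (Fin n) :=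
  Equiv.removeNone ((finSuccEquiv' p).symm.trans (ρ.trans (finSuccEquiv' 0)))

lemma reduceAt_spec {n : ℕ} (ρ : Equiv.Perm (Fin (n+1))) (p : Fin (n+1)) (hp : ρ p = 0)
    (x : Fin n) : ρ (p.succAbove x) = (reduceAt ρ p x).succ := by
  set e := (finSuccEquiv' p).symm.trans (ρ.trans (finSuccEquiv' 0)) with he
  have h1 : e (some x) = finSuccEquiv' 0 (ρ (p.succAbove x)) := by
    simp [he, finSuccEquiv'_symm_some]
  have hne : ρ (p.succAbove x) ≠ 0 := by
    intro h
    exact Fin.succAbove_ne p x (ρ.injective (h.trans hp.symm))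
  obtain ⟨y, hy⟩ := Fin.exists_succAbove_eq hne
  rw [Fin.zero_succAbove] at hy
  have h2 : e (some x) = some y := by
    rw [h1, ← hy, ← Fin.zero_succAbove, finSuccEquiv'_succAbove]
  have h3 : some (Equiv.removeNone e x) = some y := by
    rw [Equiv.removeNone_some e ⟨y, h2⟩, h2]
  have h4 : Equiv.removeNone e x = y := Option.some_injective _ h3
  have h5 : reduceAt ρ p = Equiv.removeNone e := rfl
  rw [h5, h4]
  exact hy.symm

/-- decomposition of a permutation: (preimage of 0, reduced permutation) -/
def minDecomp {n : ℕ} : Equiv.Perm (Fin (n+1)) ≃ Fin (n+1) × Equiv.Perm (Fin n) where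
  toFun ρ := (ρ⁻¹ 0, reduceAt ρ (ρ⁻¹ 0))
  invFun pe := (finSuccEquiv' pe.1).trans ((pe.2.optionCongr).trans (finSuccEquiv' 0).symm)
  left_inv ρ := by
    set p := ρ⁻¹ 0 with hpdef
    have hp : ρ p = 0 := by simp [hpdef]
    refine Equiv.ext fun u => ?_
    simp only [Equiv.trans_apply]
    rcases eq_or_ne u p with rfl | hu
    · rw [finSuccEquiv'_at]
      simp only [Equiv.optionCongr_apply, Option.map_none, finSuccEquiv'_symm_none]
      exact hp.symm
    · obtain ⟨x, hx⟩ := Fin.exists_succAbove_eq hu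
      rw [← hx, finSuccEquiv'_succAbove]
      simp only [Equiv.optionCongr_apply, Option.map_some]
      rw [finSuccEquiv'_symm_some, Fin.zero_succAbove]
      exact (reduceAt_spec ρ p hp x).symm
  right_inv pe := by
    obtain ⟨p, e⟩ := pe
    set ρ : Equiv.Perm (Fin (n+1)) :=
      (finSuccEquiv' p).trans ((e.optionCongr).trans (finSuccEquiv' 0).symm) with hrho
    have hρp : ρ p = 0 := by
      simp [hrho, finSuccEquiv'_at, finSuccEquiv'_symm_none]
    have hρs : ∀ x, ρ (p.succAbove x) = (e x).succ := by
      intro x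
      simp [hrho, finSuccEquiv'_succAbove, finSuccEquiv'_symm_some, Fin.zero_succAbove]
    have h1 : ρ⁻¹ 0 = p := by
      rw [← hρp]; exact ρ.symm_apply_apply p
    refine Prod.ext h1 ?_
    show reduceAt ρ (ρ⁻¹ 0) = e
    rw [h1]
    refine Equiv.ext fun x => ?_
    have := reduceAt_spec ρ p hρp x
    rw [hρs x] at this
    exact Fin.succ_injective n this.symm

lemma mem_rlSet_succAbove {n : ℕ} (ρ : Equiv.Perm (Fin (n+1))) (p : Fin (n+1))
    (hp : ρ p = 0) (x : Fin n) :
    p.succAbove x ∈ rlSet ρ ↔ x ∈ rlSet (reduceAt ρ p) := by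
  simp only [rlSet, mem_filter, mem_univ, true_and]
  constructor
  · intro h y hy
    have := h (p.succAbove y) ((Fin.strictMono_succAbove p) hy)
    rw [reduceAt_spec ρ p hp x, reduceAt_spec ρ p hp y] at this
    exact Fin.succ_lt_succ_iff.mp this
  · intro h w hw
    rcases eq_or_ne w p with rfl | hwp
    · rw [hp]
      rw [Fin.pos_iff_ne_zero]
      intro h0
      exact Fin.succAbove_ne w x (ρ.injective (h0.trans hp.symm))
    · obtain ⟨y, hy⟩ := Fin.exists_succAbove_eq hwp
      rw [← hy] at hw ⊢
      have hxy : x < y := (Fin.strictMono_succAbove p).lt_iff_lt.mp hw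
      rw [reduceAt_spec ρ p hp x, reduceAt_spec ρ p hp y]
      exact Fin.succ_lt_succ_iff.mpr (h y hxy)

lemma mem_rlSet_self {n : ℕ} (ρ : Equiv.Perm (Fin (n+1))) (p : Fin (n+1)) (hp : ρ p = 0) :
    p ∈ rlSet ρ ↔ p = Fin.last n := by
  simp only [rlSet, mem_filter, mem_univ, true_and]
  constructor
  · intro h
    by_contra hne
    have hlt : p < Fin.last n := Fin.lt_last_iff_ne_last.mpr hne
    have := h (Fin.last n) hlt
    rw [hp] at this
    exact absurd this (Fin.not_lt_zero _)
  · rintro rfl w hw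
    exact absurd hw (not_lt.mpr (Fin.le_last w))

lemma rl_decomp {n : ℕ} (ρ : Equiv.Perm (Fin (n+1))) (p : Fin (n+1)) (hp : ρ p = 0) :
    rl ρ = rl (reduceAt ρ p) + (if p = Fin.last n then 1 else 0) := by
  classical
  have hset : rlSet ρ = (rlSet (reduceAt ρ p)).image p.succAbove ∪
      (if p = Fin.last n then {p} else ∅) := by
    ext v
    simp only [mem_union, mem_image]
    constructor
    · intro hv
      rcases eq_or_ne v p with rfl | hvp
      · right
        have hl : v = Fin.last n := (mem_rlSet_self ρ v hp).mp hv
        simp [hl]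
      · left
        obtain ⟨x, hx⟩ := Fin.exists_succAbove_eq hvp
        exact ⟨x, (mem_rlSet_succAbove ρ p hp x).mp (hx ▸ hv), hx⟩
    · rintro (⟨x, hx, rfl⟩ | hv)
      · exact (mem_rlSet_succAbove ρ p hp x).mpr hx
      · rcases eq_or_ne p (Fin.last n) with hl | hl
        · rw [if_pos hl, mem_singleton] at hv
          subst hv
          exact (mem_rlSet_self ρ v hp).mpr hl
        · rw [if_neg hl] at hv
          exact absurd hv (notMem_empty _)
  have hdisj : Disjoint ((rlSet (reduceAt ρ p)).image p.succAbove)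
      (if p = Fin.last n then ({p} : Finset (Fin (n+1))) else ∅) := by
    rcases eq_or_ne p (Fin.last n) with hl | hl
    · rw [if_pos hl, Finset.disjoint_singleton_right, mem_image]
      rintro ⟨x, _, hx⟩
      exact Fin.succAbove_ne p x hx
    · rw [if_neg hl]
      exact disjoint_empty_right _
  rw [rl, hset, card_union_of_disjoint hdisj,
    card_image_of_injective _ (Fin.succAbove_right_injective)]
  congr 1
  split <;> simp

/-- the main counting lemma -/
lemma sum_pow_rl (k : ℕ) :
    ∑ ρ : Equiv.Perm (Fin k), 2 ^ (k - rl ρ) = Nat.doubleFactorial (2 * k - 1) := by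
  induction k with
  | zero => simp [rl, rlSet]
  | succ n ih =>
    have hstep : ∑ ρ : Equiv.Perm (Fin (n+1)), 2 ^ (n + 1 - rl ρ)
        = (2 * n + 1) * ∑ e : Equiv.Perm (Fin n), 2 ^ (n - rl e) := by
      rw [← Equiv.sum_comp minDecomp.symm (fun ρ => 2 ^ (n + 1 - rl ρ)), Fintype.sum_prod_type]
      have hrl : ∀ (p : Fin (n+1)) (e : Equiv.Perm (Fin n)),
          rl (minDecomp.symm (p, e)) = rl e + (if p = Fin.last n then 1 else 0) := by
        intro p e
        have h1 : (minDecomp (minDecomp.symm (p, e))) = (p, e) := minDecomp.apply_symm_apply _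
        set ρ := minDecomp.symm (p, e) with hρ
        have hp1 : ρ⁻¹ 0 = p := congrArg Prod.fst h1
        have hp2 : reduceAt ρ (ρ⁻¹ 0) = e := congrArg Prod.snd h1
        have hρp : ρ p = 0 := by rw [← hp1]; exact ρ.apply_symm_apply 0
        rw [rl_decomp ρ p hρp, ← hp1, hp2]
      calc ∑ p : Fin (n+1), ∑ e : Equiv.Perm (Fin n), 2 ^ (n + 1 - rl (minDecomp.symm (p, e)))
          = ∑ p : Fin (n+1), ∑ e : Equiv.Perm (Fin n),
              (if p = Fin.last n then 2 ^ (n - rl e) else 2 * 2 ^ (n - rl e)) := by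
            refine Finset.sum_congr rfl fun p _ => Finset.sum_congr rfl fun e _ => ?_
            rw [hrl p e]
            have hle := rl_le e
            split
            · congr 1; omega
            · rw [← pow_succ']
              congr 1; omega
        _ = ∑ e : Equiv.Perm (Fin n),
              (2 ^ (n - rl e) + n * (2 * 2 ^ (n - rl e))) := by
            rw [Finset.sum_comm]
            refine Finset.sum_congr rfl fun e _ => ?_
            rw [← Finset.add_sum_erase _ _ (Finset.mem_univ (Fin.last n)), if_pos rfl]
            congr 1
            rw [Finset.sum_congr rfl (fun p hp => if_neg (Finset.ne_of_mem_erase hp)),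
              Finset.sum_const, smul_eq_mul]
            congr 1
            simp [Finset.card_erase_of_mem]
        _ = (2 * n + 1) * ∑ e : Equiv.Perm (Fin n), 2 ^ (n - rl e) := by
            rw [Finset.mul_sum]
            refine Finset.sum_congr rfl fun e _ => ?_
            ring
    rw [hstep, ih]
    rcases Nat.eq_zero_or_pos n with rfl | hn
    · decide
    · have h1 : 2 * (n + 1) - 1 = (2 * n - 1) + 2 := by omega
      rw [h1, Nat.doubleFactorial_add_two]
      have h2 : 2 * n - 1 + 2 = 2 * n + 1 := by omega
      rw [h2]

end
noncomputable section GameAnalysis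
open Classical

variable {n : ℕ}

lemma fin2_eq_add_one_of_ne {a b : Fin 2} (h : a ≠ b) : a = b + 1 := by revert h; revert a b; decide

lemma fin2_add_one_ne (i : Fin 2) : i + 1 ≠ i := by revert i; decide

lemma fin2_cases' (a b : Fin 2) : a = b ∨ a = b + 1 := by revert a b; decide

lemma fin2_of_two_vals {a b : Fin 2} (h : a ≠ b) (c : Fin 2) : c = a ∨ c = b := by
  revert h; revert a b c; decide

/-- the winning row in column `j` -/
def winRow (ω : Omega 2 n) (j : Fin n) : Fin 2 := (ω.1 j).symm 1

/-- columns undominated in the full game -/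
def PCol (ω : Omega 2 n) : Finset (Fin n) :=
  Finset.univ.filter fun j => ¬ ColDomIn (CPay ω) Finset.univ Finset.univ j

variable (ω : Omega 2 n)

lemma RPay_lt_win {j : Fin n} {i : Fin 2} (h : i ≠ winRow ω j) :
    RPay ω i j < RPay ω (winRow ω j) j := by
  have h1 : (ω.1 j) (winRow ω j) = 1 := (ω.1 j).apply_symm_apply 1
  have h0 : (ω.1 j) i ≠ 1 := by
    intro hc
    exact h (by rw [← h1] at hc; exact (ω.1 j).injective hc)
  have h2 : (ω.1 j) i = 0 := by
    have : ∀ a : Fin 2, a ≠ 1 → a = 0 := by decide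
    exact this _ h0
  show (((ω.1 j) i : ℕ) : ℝ) < (((ω.1 j) (winRow ω j) : ℕ) : ℝ)
  rw [h1, h2]
  norm_num

lemma RPay_le_win (j : Fin n) (i : Fin 2) : RPay ω i j ≤ RPay ω (winRow ω j) j := by
  rcases eq_or_ne i (winRow ω j) with rfl | h
  · exact le_refl _
  · exact le_of_lt (RPay_lt_win ω h)

lemma CPay_lt_iff {i : Fin 2} {j j' : Fin n} :
    CPay ω i j < CPay ω i j' ↔ (ω.2 i) j < (ω.2 i) j' := by
  show (((ω.2 i) j : ℕ) : ℝ) < (((ω.2 i) j' : ℕ) : ℝ) ↔ _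
  rw [Nat.cast_lt]
  exact Iff.rfl

lemma CPay_inj (i : Fin 2) {j j' : Fin n} (h : CPay ω i j = CPay ω i j') : j = j' := by
  have : (((ω.2 i) j : ℕ) : ℝ) = (((ω.2 i) j' : ℕ) : ℝ) := h
  exact (ω.2 i).injective (Fin.val_injective (Nat.cast_injective this))

/-- row dominance in the 2-row game with full row set -/
lemma rowDom_univ_iff {Y : Finset (Fin n)} (hY : Y.Nonempty) (i : Fin 2) :
    RowDomIn (RPay ω) Finset.univ Y i ↔ ∀ j ∈ Y, winRow ω j = i + 1 := by
  constructor
  · rintro ⟨i', -, h⟩ j hj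
    have hlt : RPay ω i j < RPay ω (winRow ω j) j :=
      lt_of_lt_of_le (h j hj) (RPay_le_win ω j i')
    have : winRow ω j ≠ i := by
      intro hc
      rw [hc] at hlt
      exact lt_irrefl _ hlt
    exact fin2_eq_add_one_of_ne this
  · intro h
    refine ⟨i + 1, Finset.mem_univ _, fun j hj => ?_⟩
    have hw := h j hj
    have : i ≠ winRow ω j := by rw [hw]; exact (fin2_add_one_ne i).symm
    have := RPay_lt_win ω this
    rwa [hw] at this

lemma not_rowDom_of_win {Y : Finset (Fin n)} {j0 : Fin n} (hj0 : j0 ∈ Y) {i : Fin 2}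
    (hw : winRow ω j0 = i) : ¬ RowDomIn (RPay ω) Finset.univ Y i := by
  intro h
  have := (rowDom_univ_iff ω ⟨j0, hj0⟩ i).mp h j0 hj0
  rw [hw] at this
  exact fin2_add_one_ne i this.symm

lemma not_rowDom_singleton {Y : Finset (Fin n)} (hY : Y.Nonempty) (i : Fin 2) :
    ¬ RowDomIn (RPay ω) {i} Y i := by
  rintro ⟨i', hi', h⟩
  rw [Finset.mem_singleton] at hi'
  subst hi'
  obtain ⟨j, hj⟩ := hY
  exact lt_irrefl _ (h j hj)

lemma PCol_nonempty (hn : 1 ≤ n) : (PCol ω).Nonempty := by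
  obtain ⟨j0, -, hmax⟩ := Finset.exists_max_image Finset.univ (CPay ω 0)
    ⟨⟨0, hn⟩, Finset.mem_univ _⟩
  refine ⟨j0, ?_⟩
  rw [PCol, Finset.mem_filter]
  refine ⟨Finset.mem_univ _, ?_⟩
  rintro ⟨j', -, hdom⟩
  exact absurd (hmax j' (Finset.mem_univ _)) (not_le.mpr (hdom 0 (Finset.mem_univ _)))

lemma PCol_not_dom {j : Fin n} (hj : j ∈ PCol ω) :
    ¬ ColDomIn (CPay ω) Finset.univ (PCol ω) j := by
  rintro ⟨j', hj', hdom⟩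
  rw [PCol, Finset.mem_filter] at hj
  exact hj.2 ⟨j', Finset.mem_univ _, hdom⟩

lemma colfilter_singleton (i : Fin 2) {Y : Finset (Fin n)} (hY : Y.Nonempty) :
    ∃ jm ∈ Y, Y.filter (fun j => ¬ ColDomIn (CPay ω) {i} Y j) = {jm} := by
  obtain ⟨jm, hjm, hmax⟩ := Finset.exists_max_image Y (CPay ω i) hY
  refine ⟨jm, hjm, ?_⟩
  ext j
  rw [Finset.mem_filter, Finset.mem_singleton]
  constructor
  · rintro ⟨hjY, hnd⟩
    by_contra hne
    refine hnd ⟨jm, hjm, fun i' hi' => ?_⟩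
    rw [Finset.mem_singleton] at hi'
    subst hi'
    rcases lt_or_eq_of_le (hmax j hjY) with h | h
    · exact h
    · exact absurd (CPay_inj ω i' h) hne
  · rintro rfl
    refine ⟨hjm, ?_⟩
    rintro ⟨j', hj', hdom⟩
    exact absurd (hmax j' hj') (not_le.mpr (hdom i (Finset.mem_singleton_self i)))

/-- Round 1 when both rows have a winning column somewhere. -/
lemma step_univ_univ (hn : 1 ≤ n) (hboth : ∀ i : Fin 2, ∃ j, winRow ω j = i) :
    elimStep (RPay ω) (CPay ω) (Finset.univ, Finset.univ) = (Finset.univ, PCol ω) := by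
  have hfst : (Finset.univ.filter fun i =>
      ¬ RowDomIn (RPay ω) Finset.univ Finset.univ i) = Finset.univ := by
    refine Finset.filter_true_of_mem fun i _ => ?_
    obtain ⟨j, hj⟩ := hboth i
    exact not_rowDom_of_win ω (Finset.mem_univ j) hj
  refine Prod.ext ?_ ?_
  · show (Finset.univ.filter fun i =>
      ¬ RowDomIn (RPay ω) Finset.univ Finset.univ i) = Finset.univ
    exact hfst
  · rfl

/-- Round 1 when row `i` wins everywhere. -/
lemma step_const (hn : 1 ≤ n) (i : Fin 2) (hconst : ∀ j, winRow ω j = i) :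
    elimStep (RPay ω) (CPay ω) (Finset.univ, Finset.univ) = ({i}, PCol ω) := by
  refine Prod.ext ?_ rfl
  show (Finset.univ.filter fun i' =>
      ¬ RowDomIn (RPay ω) Finset.univ Finset.univ i') = {i}
  ext a
  rw [Finset.mem_filter, Finset.mem_singleton]
  constructor
  · rintro ⟨-, hnd⟩
    by_contra hne
    refine hnd ((rowDom_univ_iff ω ⟨⟨0, hn⟩, Finset.mem_univ _⟩ a).mpr fun j _ => ?_)
    rw [hconst j, fin2_eq_add_one_of_ne (Ne.symm hne)]
  · rintro rfl
    exact ⟨Finset.mem_univ _, not_rowDom_of_win ω (Finset.mem_univ (⟨0, hn⟩ : Fin n))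
      (hconst _)⟩

/-- Round 2 in case B: all of `PCol` won by row `i`. -/
lemma step_univ_P (i : Fin 2) {jP : Fin n} (hjP : jP ∈ PCol ω)
    (hP : ∀ j ∈ PCol ω, winRow ω j = i) :
    elimStep (RPay ω) (CPay ω) (Finset.univ, PCol ω) = ({i}, PCol ω) := by
  refine Prod.ext ?_ ?_
  · show (Finset.univ.filter fun i' =>
      ¬ RowDomIn (RPay ω) Finset.univ (PCol ω) i') = {i}
    ext a
    rw [Finset.mem_filter, Finset.mem_singleton]
    constructor
    · rintro ⟨-, hnd⟩
      by_contra hne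
      refine hnd ((rowDom_univ_iff ω ⟨jP, hjP⟩ a).mpr fun j hj => ?_)
      rw [hP j hj, fin2_eq_add_one_of_ne (Ne.symm hne)]
    · rintro rfl
      exact ⟨Finset.mem_univ _, not_rowDom_of_win ω hjP (hP jP hjP)⟩
  · show ((PCol ω).filter fun j => ¬ ColDomIn (CPay ω) Finset.univ (PCol ω) j) = PCol ω
    exact Finset.filter_true_of_mem fun j hj => PCol_not_dom ω hj

/-- Case C: both rows win somewhere in `PCol`; the pair `(univ, PCol)` is a fixed point. -/
lemma step_fixed_univ_P (hboth : ∀ i : Fin 2, ∃ j ∈ PCol ω, winRow ω j = i) :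
    elimStep (RPay ω) (CPay ω) (Finset.univ, PCol ω) = (Finset.univ, PCol ω) := by
  refine Prod.ext ?_ ?_
  · show (Finset.univ.filter fun i' =>
      ¬ RowDomIn (RPay ω) Finset.univ (PCol ω) i') = Finset.univ
    refine Finset.filter_true_of_mem fun i _ => ?_
    obtain ⟨j, hj, hw⟩ := hboth i
    exact not_rowDom_of_win ω hj hw
  · show ((PCol ω).filter fun j => ¬ ColDomIn (CPay ω) Finset.univ (PCol ω) j) = PCol ω
    exact Finset.filter_true_of_mem fun j hj => PCol_not_dom ω hj

/-- One more round from `({i}, Y)` reaches a singleton pair. -/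
lemma step_single (i : Fin 2) {Y : Finset (Fin n)} (hY : Y.Nonempty) :
    ∃ jm, elimStep (RPay ω) (CPay ω) ({i}, Y) = ({i}, {jm}) := by
  obtain ⟨jm, hjm, hfil⟩ := colfilter_singleton ω i hY
  refine ⟨jm, Prod.ext ?_ ?_⟩
  · show ({i} : Finset (Fin 2)).filter (fun i' => ¬ RowDomIn (RPay ω) {i} Y i') = {i}
    refine Finset.filter_true_of_mem fun a ha => ?_
    rw [Finset.mem_singleton] at ha
    subst ha
    exact not_rowDom_singleton ω hY a
  · show Y.filter (fun j => ¬ ColDomIn (CPay ω) {i} Y j) = {jm}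
    exact hfil

/-- singleton pairs are fixed points -/
lemma step_fixed_single (i : Fin 2) (j : Fin n) :
    elimStep (RPay ω) (CPay ω) ({i}, {j}) = ({i}, {j}) := by
  refine Prod.ext ?_ ?_
  · show ({i} : Finset (Fin 2)).filter (fun i' => ¬ RowDomIn (RPay ω) {i} {j} i') = {i}
    refine Finset.filter_true_of_mem fun a ha => ?_
    rw [Finset.mem_singleton] at ha
    subst ha
    exact not_rowDom_singleton ω ⟨j, Finset.mem_singleton_self j⟩ a
  · show ({j} : Finset (Fin n)).filter (fun j' => ¬ ColDomIn (CPay ω) {i} {j} j') = {j}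
    refine Finset.filter_true_of_mem fun a ha => ?_
    rw [Finset.mem_singleton] at ha
    subst ha
    rintro ⟨j', hj', hdom⟩
    rw [Finset.mem_singleton] at hj'
    subst hj'
    exact lt_irrefl _ (hdom i (Finset.mem_singleton_self i))

theorem gameSolvable_iff (hn : 1 ≤ n) :
    GameSolvable ω ↔ ∀ j ∈ PCol ω, ∀ j' ∈ PCol ω, winRow ω j = winRow ω j' := by
  have hiter : survivors (RPay ω) (CPay ω)
      = (elimStep (RPay ω) (CPay ω))^[2 + n] (Finset.univ, Finset.univ) := rfl
  constructor
  · -- contrapositive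
    intro hsolv
    by_contra hne
    push_neg at hne
    obtain ⟨j1, hj1, j2, hj2, hw⟩ := hne
    have hboth : ∀ i : Fin 2, ∃ j ∈ PCol ω, winRow ω j = i := by
      intro i
      rcases fin2_of_two_vals hw i with h | h
      · exact ⟨j1, hj1, h.symm⟩
      · exact ⟨j2, hj2, h.symm⟩
    have h1 : elimStep (RPay ω) (CPay ω) (Finset.univ, Finset.univ)
        = (Finset.univ, PCol ω) :=
      step_univ_univ ω hn (fun i => (hboth i).imp fun j h => h.2)
    have h2 := step_fixed_univ_P ω hboth
    have hsurv : survivors (RPay ω) (CPay ω) = (Finset.univ, PCol ω) := by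
      rw [hiter, show 2 + n = (n + 1) + 1 from by omega, Function.iterate_add_apply,
        Function.iterate_one, h1, Function.iterate_fixed h2]
    have hcard : (survivors (RPay ω) (CPay ω)).1.card = 1 := hsolv.1
    rw [hsurv] at hcard
    simp at hcard
  · intro hconst
    obtain ⟨jP, hjP⟩ := PCol_nonempty ω hn
    set i := winRow ω jP with hidef
    have hPi : ∀ j ∈ PCol ω, winRow ω j = i := fun j hj => hconst j hj jP hjP
    by_cases hall : ∀ j, winRow ω j = i
    · have h1 := step_const ω hn i hall
      obtain ⟨jm, h2⟩ := step_single ω i (PCol_nonempty ω hn)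
      have h3 := step_fixed_single ω i jm
      have hsurv : survivors (RPay ω) (CPay ω) = ({i}, {jm}) := by
        rw [hiter, show 2 + n = n + 2 from by omega, Function.iterate_add_apply]
        have e2 : (elimStep (RPay ω) (CPay ω))^[2] (Finset.univ, Finset.univ)
            = ({i}, {jm}) := by
          show elimStep (RPay ω) (CPay ω) (elimStep (RPay ω) (CPay ω)
            (Finset.univ, Finset.univ)) = _
          rw [h1, h2]
        rw [e2, Function.iterate_fixed h3]
      constructor
      · show (survivors (RPay ω) (CPay ω)).1.card = 1
        rw [hsurv]; simp
      · show (survivors (RPay ω) (CPay ω)).2.card = 1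
        rw [hsurv]; simp
    · push_neg at hall
      obtain ⟨j1, hj1⟩ := hall
      have hboth : ∀ i0 : Fin 2, ∃ j, winRow ω j = i0 := by
        intro i0
        rcases fin2_of_two_vals (Ne.symm hj1) i0 with h | h
        · exact ⟨jP, h.symm⟩
        · exact ⟨j1, h.symm⟩
      have h1 := step_univ_univ ω hn hboth
      have h2 := step_univ_P ω i hjP hPi
      obtain ⟨jm, h3⟩ := step_single ω i (PCol_nonempty ω hn)
      have h4 := step_fixed_single ω i jm
      have hsurv : survivors (RPay ω) (CPay ω) = ({i}, {jm}) := by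
        rw [hiter, show 2 + n = (n - 1) + 3 from by omega, Function.iterate_add_apply]
        have e3 : (elimStep (RPay ω) (CPay ω))^[3] (Finset.univ, Finset.univ)
            = ({i}, {jm}) := by
          show elimStep (RPay ω) (CPay ω) (elimStep (RPay ω) (CPay ω)
            (elimStep (RPay ω) (CPay ω) (Finset.univ, Finset.univ))) = _
          rw [h1, h2, h3]
        rw [e3, Function.iterate_fixed h4]
      constructor
      · show (survivors (RPay ω) (CPay ω)).1.card = 1
        rw [hsurv]; simp
      · show (survivors (RPay ω) (CPay ω)).2.card = 1
        rw [hsurv]; simp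

end GameAnalysis
noncomputable section Counting
open Classical

variable {n : ℕ}

def Pset (c : Fin 2 → Equiv.Perm (Fin n)) : Finset (Fin n) :=
  Finset.univ.filter fun j => ¬ ∃ j', c 0 j < c 0 j' ∧ c 1 j < c 1 j'

lemma PCol_eq_Pset (ω : Omega 2 n) : PCol ω = Pset ω.2 := by
  ext j
  rw [PCol, Pset, Finset.mem_filter, Finset.mem_filter]
  apply and_congr_right'
  apply not_congr
  constructor
  · rintro ⟨j', -, h⟩
    exact ⟨j', (CPay_lt_iff ω).mp (h 0 (Finset.mem_univ _)),
      (CPay_lt_iff ω).mp (h 1 (Finset.mem_univ _))⟩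
  · rintro ⟨j', h0, h1⟩
    refine ⟨j', Finset.mem_univ _, fun i _ => ?_⟩
    rcases fin2_of_two_vals (show (0:Fin 2) ≠ 1 by decide) i with rfl | rfl
    · exact (CPay_lt_iff ω).mpr h0
    · exact (CPay_lt_iff ω).mpr h1

lemma Pset_nonempty (hn : 1 ≤ n) (c : Fin 2 → Equiv.Perm (Fin n)) : (Pset c).Nonempty := by
  have := PCol_nonempty ((fun _ => 1, c) : Omega 2 n) hn
  rwa [PCol_eq_Pset] at this

lemma card_Pset (c : Fin 2 → Equiv.Perm (Fin n)) :
    (Pset c).card = rl (c 1 * (c 0)⁻¹) := by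
  set a := c 0 with ha
  set b := c 1 with hb
  have happ : ∀ w, (b * a⁻¹) w = b (a⁻¹ w) := fun w => rfl
  have happ2 : ∀ j, (b * a⁻¹) (a j) = b j := by
    intro j; rw [happ]; congr 1; exact a.symm_apply_apply j
  have hiff : ∀ j, j ∈ Pset c ↔ a j ∈ rlSet (b * a⁻¹) := by
    intro j
    rw [Pset, Finset.mem_filter, rlSet, Finset.mem_filter]
    simp only [Finset.mem_univ, true_and]
    constructor
    · intro h w hw
      rw [happ, happ2]
      rcases lt_trichotomy (b (a⁻¹ w)) (b j) with h1 | h1 | h1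
      · exact h1
      · exfalso
        have : a⁻¹ w = j := b.injective h1
        rw [← this, (show ∀ x, a (a⁻¹ x) = x from a.apply_symm_apply)] at hw
        exact lt_irrefl _ hw
      · exfalso
        refine h ⟨a⁻¹ w, ?_, h1⟩
        rwa [(show ∀ x, a (a⁻¹ x) = x from a.apply_symm_apply)]
    · rintro h ⟨j', h1, h2⟩
      have := h (a j') h1
      rw [happ2, happ2] at this
      exact absurd h2 (not_lt.mpr (le_of_lt this))
  refine Finset.card_bij (fun j _ => a j) (fun j hj => (hiff j).mp hj)
    (fun j1 _ j2 _ h => a.injective h) (fun w hw => ⟨a⁻¹ w, ?_, (show ∀ x, a (a⁻¹ x) = x from a.apply_symm_apply) w⟩)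
  rw [hiff]
  rwa [(show ∀ x, a (a⁻¹ x) = x from a.apply_symm_apply)]

lemma card_const_on (P : Finset (Fin n)) (hP : P.Nonempty) :
    (Finset.univ.filter fun r : Fin n → Equiv.Perm (Fin 2) =>
       ∀ j ∈ P, ∀ j' ∈ P, r j = r j').card = 2 * 2 ^ (n - P.card) := by
  obtain ⟨j0, hj0⟩ := hP
  have hset : (Finset.univ.filter fun r : Fin n → Equiv.Perm (Fin 2) =>
       ∀ j ∈ P, ∀ j' ∈ P, r j = r j') =
      Finset.univ.biUnion (fun v : Equiv.Perm (Fin 2) =>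
        Fintype.piFinset (fun j => if j ∈ P then {v} else Finset.univ)) := by
    ext r
    rw [Finset.mem_filter, Finset.mem_biUnion]
    constructor
    · rintro ⟨-, h⟩
      refine ⟨r j0, Finset.mem_univ _, ?_⟩
      rw [Fintype.mem_piFinset]
      intro j
      by_cases hj : j ∈ P
      · rw [if_pos hj, Finset.mem_singleton]
        exact h j hj j0 hj0
      · rw [if_neg hj]; exact Finset.mem_univ _
    · rintro ⟨v, -, hv⟩
      rw [Fintype.mem_piFinset] at hv
      refine ⟨Finset.mem_univ _, fun j hj j' hj' => ?_⟩
      have h1 := hv j; rw [if_pos hj, Finset.mem_singleton] at h1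
      have h2 := hv j'; rw [if_pos hj', Finset.mem_singleton] at h2
      rw [h1, h2]
  rw [hset, Finset.card_biUnion]
  · have hc : ∀ v : Equiv.Perm (Fin 2),
        (Fintype.piFinset (fun j => if j ∈ P then ({v} : Finset (Equiv.Perm (Fin 2)))
          else Finset.univ)).card = 2 ^ (n - P.card) := by
      intro v
      rw [Fintype.card_piFinset]
      have heach : ∀ j : Fin n, ((if j ∈ P then ({v} : Finset (Equiv.Perm (Fin 2)))
          else Finset.univ)).card = if j ∈ P then 1 else 2 := by
        intro j
        split
        · exact Finset.card_singleton v
        · rw [Finset.card_univ, Fintype.card_perm, Fintype.card_fin]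
          decide
      rw [Finset.prod_congr rfl (fun j _ => heach j), Finset.prod_ite]
      rw [Finset.prod_const_one, Finset.prod_const, one_mul]
      congr 1
      have : Finset.univ.filter (fun j => ¬ j ∈ P) = Pᶜ := by
        ext j; simp [Finset.mem_compl]
      rw [this, Finset.card_compl, Fintype.card_fin]
    rw [Finset.sum_congr rfl (fun v _ => hc v), Finset.sum_const, Finset.card_univ,
      Fintype.card_perm, Fintype.card_fin, smul_eq_mul]
    norm_num [Nat.factorial]
  · intro v _ v' _ hvv
    rw [Function.onFun, Finset.disjoint_left]
    intro r h1 h2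
    rw [Fintype.mem_piFinset] at h1 h2
    have e1 := h1 j0; rw [if_pos hj0, Finset.mem_singleton] at e1
    have e2 := h2 j0; rw [if_pos hj0, Finset.mem_singleton] at e2
    exact hvv (e1 ▸ e2 ▸ rfl)

lemma perm2_eq_of_symm_one {σ τ : Equiv.Perm (Fin 2)} (h : σ.symm 1 = τ.symm 1) : σ = τ := by
  revert h; revert σ τ; decide

lemma count_solvable (hn : 1 ≤ n) :
    (Finset.univ.filter fun ω : Omega 2 n => GameSolvable ω).card
      = Nat.factorial n * (2 * Nat.doubleFactorial (2 * n - 1)) := by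
  have hchar : ∀ ω : Omega 2 n, GameSolvable ω ↔
      ∀ j ∈ Pset ω.2, ∀ j' ∈ Pset ω.2, ω.1 j = ω.1 j' := by
    intro ω
    rw [gameSolvable_iff ω hn, PCol_eq_Pset]
    constructor
    · intro h j hj j' hj'
      exact perm2_eq_of_symm_one (h j hj j' hj')
    · intro h j hj j' hj'
      rw [winRow, winRow, h j hj j' hj']
  rw [Finset.filter_congr (fun ω _ => by rw [hchar ω])]
  rw [Finset.card_filter, Fintype.sum_prod_type, Finset.sum_comm]
  have hinner : ∀ c : Fin 2 → Equiv.Perm (Fin n),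
      (∑ r : Fin n → Equiv.Perm (Fin 2),
        if (∀ j ∈ Pset c, ∀ j' ∈ Pset c, r j = r j') then 1 else 0)
      = 2 * 2 ^ (n - rl (c 1 * (c 0)⁻¹)) := by
    intro c
    rw [← Finset.card_filter, card_const_on (Pset c) (Pset_nonempty hn c), card_Pset]
  rw [Finset.sum_congr rfl (fun c _ => hinner c)]
  have hre := Fintype.sum_equiv (piFinTwoEquiv (fun _ => Equiv.Perm (Fin n)))
    (fun c : Fin 2 → Equiv.Perm (Fin n) => 2 * 2 ^ (n - rl (c 1 * (c 0)⁻¹)))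
    (fun p : Equiv.Perm (Fin n) × Equiv.Perm (Fin n) => 2 * 2 ^ (n - rl (p.2 * p.1⁻¹)))
    (fun c => rfl)
  rw [hre]
  rw [Fintype.sum_prod_type]
  have houter : ∀ a : Equiv.Perm (Fin n),
      (∑ b : Equiv.Perm (Fin n), 2 * 2 ^ (n - rl (b * a⁻¹)))
        = 2 * Nat.doubleFactorial (2 * n - 1) := by
    intro a
    rw [← Equiv.sum_comp (Equiv.mulRight a) (fun b => 2 * 2 ^ (n - rl (b * a⁻¹)))]
    have : ∀ ρ : Equiv.Perm (Fin n), (Equiv.mulRight a ρ) * a⁻¹ = ρ := by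
      intro ρ; simp [Equiv.mulRight]
    simp only [this]
    rw [← Finset.mul_sum, sum_pow_rl]
  rw [Finset.sum_congr rfl (fun a _ => houter a), Finset.sum_const, Finset.card_univ,
    Fintype.card_perm, Fintype.card_fin, smul_eq_mul]

lemma probSolvable_eq (hn : 1 ≤ n) :
    probSolvable 2 n = (Nat.factorial n * (2 * Nat.doubleFactorial (2 * n - 1)) : ℕ) /
      ((2 ^ n * (Nat.factorial n)^2 : ℕ) : ℝ) := by
  rw [probSolvable, Pr]
  congr 1
  · norm_cast
    rw [← count_solvable hn]
    congr 1
    ext ω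
    simp [Set.Finite.mem_toFinset]
  · congr 1
    rw [show Fintype.card (Omega 2 n) = Fintype.card (Fin n → Equiv.Perm (Fin 2)) *
      Fintype.card (Fin 2 → Equiv.Perm (Fin n)) from Fintype.card_prod _ _]
    rw [Fintype.card_fun, Fintype.card_fun, Fintype.card_perm, Fintype.card_perm]
    norm_num [Nat.factorial]
    try ring

end Counting
lemma df_odd (k : ℕ) :
    Nat.doubleFactorial (2 * (k + 1) - 1) = (2 * k + 1) * Nat.doubleFactorial (2 * k - 1) := by
  rcases Nat.eq_zero_or_pos k with rfl | hk
  · decide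
  · have h : 2 * (k + 1) - 1 = (2 * k - 1) + 2 := by omega
    rw [h, Nat.doubleFactorial_add_two]
    have h2 : 2 * k - 1 + 2 = 2 * k + 1 := by omega
    rw [h2]

lemma gamma_half (k : ℕ) :
    Real.Gamma ((k : ℝ) + 1 / 2)
      = (Nat.doubleFactorial (2 * k - 1) : ℝ) / 2 ^ k * Real.sqrt Real.pi := by
  induction k with
  | zero =>
    simp only [Nat.cast_zero, zero_add]
    norm_num [Nat.doubleFactorial]
    exact Real.Gamma_one_half_eq
  | succ k ih =>
    have h1 : ((k + 1 : ℕ) : ℝ) + 1 / 2 = ((k : ℝ) + 1 / 2) + 1 := by push_cast; ring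
    have h2 : ((k : ℝ) + 1 / 2) ≠ 0 := by positivity
    rw [h1, Real.Gamma_add_one h2, ih, df_odd]
    push_cast
    ring

theorem stmt2' (n : ℕ) (hn : 1 ≤ n) :
    probSolvable 2 n
      = (Nat.doubleFactorial (2 * n - 1) : ℝ) / (2 ^ (n - 1) * (Nat.factorial n : ℝ)) ∧
    probSolvable 2 n
      = 2 * Real.Gamma ((n : ℝ) + 1 / 2) / (Real.Gamma (1 / 2) * Real.Gamma ((n : ℝ) + 1)) := by
  have hfact : (Nat.factorial n : ℝ) ≠ 0 := Nat.cast_ne_zero.mpr (Nat.factorial_ne_zero n)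
  have hsqrt : Real.sqrt Real.pi ≠ 0 := by
    have := Real.pi_pos
    positivity
  have hpow : (2 : ℝ) ^ (n - 1) ≠ 0 := by positivity
  have h2n : (2 : ℝ) ^ n = 2 * 2 ^ (n - 1) := by
    rw [← pow_succ']
    congr 1
    omega
  have h1 : probSolvable 2 n
      = (Nat.doubleFactorial (2 * n - 1) : ℝ) / (2 ^ (n - 1) * (Nat.factorial n : ℝ)) := by
    rw [probSolvable_eq hn]
    push_cast
    rw [h2n]
    field_simp
  refine ⟨h1, ?_⟩
  rw [h1, Real.Gamma_one_half_eq, gamma_half n, Real.Gamma_nat_eq_factorial, h2n]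
  field_simp

/-- For every `n ≥ 1`, `π(2,n) = (2n−1)!!/(2^(n−1)·n!)`, which also equals
`2·Γ(n+1/2)/(Γ(1/2)·Γ(n+1))`. -/
theorem stmt2 (n : ℕ) (hn : 1 ≤ n) :
    probSolvable 2 n
      = (Nat.doubleFactorial (2 * n - 1) : ℝ) / (2 ^ (n - 1) * (Nat.factorial n : ℝ)) ∧
    probSolvable 2 n
      = 2 * Real.Gamma ((n : ℝ) + 1 / 2) / (Real.Gamma (1 / 2) * Real.Gamma ((n : ℝ) + 1)) :=
  stmt2' n hn
end

section
/- For every n ≥ 1, the expected number of elimination rounds in G(2,n), conditional on G(2,n) being strict-dominance solvable, equals E[I(2,n)] = 3 − ((n + 2^{n−1})/2^n) · √π · Γ(n)/Γ(n+1/2). -/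
open Finset Filter

namespace Stmt5Aux
open Finset Equiv Classical
set_option maxRecDepth 8000

abbrev P2 := Equiv.Perm (Fin 2)

def other : Fin 2 → Fin 2 := fun i => if i = 0 then 1 else 0

def fav (π : P2) : Fin 2 := if π 0 < π 1 then 1 else 0

lemma other_ne (i : Fin 2) : other i ≠ i := by fin_cases i <;> decide

lemma fin2_cases (i' i : Fin 2) : i' = i ∨ i' = other i := by
  fin_cases i <;> fin_cases i' <;> simp [other]

lemma fav_lt_iff (π : P2) (i : Fin 2) : π i < π (other i) ↔ fav π = other i := by
  fin_cases i <;> revert π <;> decide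

lemma fav_inj (π π' : P2) (h : fav π = fav π') : π = π' := by revert h; revert π π'; decide

lemma exists_fav (i : Fin 2) : ∃ c : P2, fav c = i := by fin_cases i <;> decide

lemma univ2_ne_single (i : Fin 2) : ({i} : Finset (Fin 2)) ≠ univ := by fin_cases i <;> decide

variable {n : ℕ}

lemma RPay_lt (ω : Omega 2 n) (i i' : Fin 2) (j : Fin n) :
    RPay ω i j < RPay ω i' j ↔ ω.1 j i < ω.1 j i' := by
  rw [RPay, RPay, Nat.cast_lt]
  exact (Fin.lt_def ..).symm

lemma CPay_lt (ω : Omega 2 n) (i : Fin 2) (j j' : Fin n) :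
    CPay ω i j < CPay ω i j' ↔ ω.2 i j < ω.2 i j' := by
  rw [CPay, CPay, Nat.cast_lt]
  exact (Fin.lt_def ..).symm

lemma rowDom_univ_iff (ω : Omega 2 n) (Y : Finset (Fin n)) (hY : Y.Nonempty) (i : Fin 2) :
    RowDomIn (RPay ω) univ Y i ↔ ∀ j ∈ Y, fav (ω.1 j) = other i := by
  constructor
  · rintro ⟨i', -, h⟩
    rcases fin2_cases i' i with rfl | rfl
    · obtain ⟨j, hj⟩ := hY; exact absurd (h j hj) (lt_irrefl _)
    · intro j hj; exact (fav_lt_iff _ _).1 ((RPay_lt ..).1 (h j hj))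
  · intro h
    exact ⟨other i, mem_univ _, fun j hj => (RPay_lt ..).2 ((fav_lt_iff _ _).2 (h j hj))⟩

lemma colDom_univ_iff (ω : Omega 2 n) (Y : Finset (Fin n)) (j : Fin n) :
    ColDomIn (CPay ω) (univ : Finset (Fin 2)) Y j ↔
      ∃ j' ∈ Y, ω.2 0 j < ω.2 0 j' ∧ ω.2 1 j < ω.2 1 j' := by
  constructor
  · rintro ⟨j', hj', h⟩
    exact ⟨j', hj', (CPay_lt ..).1 (h 0 (mem_univ _)), (CPay_lt ..).1 (h 1 (mem_univ _))⟩
  · rintro ⟨j', hj', h0, h1⟩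
    refine ⟨j', hj', ?_⟩
    intro i _
    fin_cases i
    · exact (CPay_lt ..).2 h0
    · exact (CPay_lt ..).2 h1

lemma colDom_single_iff (ω : Omega 2 n) (i0 : Fin 2) (Y : Finset (Fin n)) (j : Fin n) :
    ColDomIn (CPay ω) {i0} Y j ↔ ∃ j' ∈ Y, ω.2 i0 j < ω.2 i0 j' := by
  constructor
  · rintro ⟨j', hj', h⟩
    exact ⟨j', hj', (CPay_lt ..).1 (h i0 (mem_singleton_self _))⟩
  · rintro ⟨j', hj', h⟩
    refine ⟨j', hj', ?_⟩
    intro i hi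
    rw [mem_singleton] at hi; subst hi
    exact (CPay_lt ..).2 h

/-- The Pareto frontier of columns for the pair of permutations `(α, β)`. -/
def Fp (α β : Equiv.Perm (Fin n)) : Finset (Fin n) :=
  univ.filter fun j => ∀ j', α j < α j' → ¬ β j < β j'

def Fset (σ : Fin 2 → Equiv.Perm (Fin n)) : Finset (Fin n) := Fp (σ 0) (σ 1)

lemma mem_Fp {α β : Equiv.Perm (Fin n)} {j : Fin n} :
    j ∈ Fp α β ↔ ∀ j', α j < α j' → ¬ β j < β j' := by simp [Fp]

lemma Fp_nonempty (hn : 1 ≤ n) (α β : Equiv.Perm (Fin n)) : (Fp α β).Nonempty := by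
  have hu : (univ : Finset (Fin n)).Nonempty := ⟨⟨0, hn⟩, mem_univ _⟩
  obtain ⟨j0, -, hj0⟩ := univ.exists_max_image α hu
  exact ⟨j0, mem_Fp.2 fun j' h _ => absurd (hj0 j' (mem_univ _)) (not_le.2 h)⟩

lemma Fset_nonempty (hn : 1 ≤ n) (σ : Fin 2 → Equiv.Perm (Fin n)) : (Fset σ).Nonempty :=
  Fp_nonempty hn _ _

lemma cols_univ_univ (ω : Omega 2 n) :
    (univ.filter fun j => ¬ ColDomIn (CPay ω) univ univ j) = Fset ω.2 := by
  ext j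
  simp only [mem_filter, mem_univ, true_and, Fset, mem_Fp]
  rw [colDom_univ_iff]
  constructor
  · intro h j' h1 h2; exact h ⟨j', mem_univ _, h1, h2⟩
  · rintro h ⟨j', -, h1, h2⟩; exact h j' h1 h2

lemma cols_sub_F (ω : Omega 2 n) {Y : Finset (Fin n)} (hY : Y ⊆ Fset ω.2) :
    (Y.filter fun j => ¬ ColDomIn (CPay ω) univ Y j) = Y := by
  rw [filter_eq_self]
  intro j hj
  rw [colDom_univ_iff]
  rintro ⟨j', _, h1, h2⟩
  exact (mem_Fp.1 (hY hj)) j' h1 h2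

lemma cols_single (ω : Omega 2 n) (i0 : Fin 2) {Y : Finset (Fin n)} (hY : Y.Nonempty) :
    ∃ jm ∈ Y, (Y.filter fun j => ¬ ColDomIn (CPay ω) {i0} Y j) = {jm} := by
  obtain ⟨jm, hm, hmax⟩ := Y.exists_max_image (fun j => ω.2 i0 j) hY
  refine ⟨jm, hm, ?_⟩
  ext j
  simp only [mem_filter, mem_singleton]
  rw [colDom_single_iff]
  constructor
  · rintro ⟨hj, h⟩
    by_contra hne
    exact h ⟨jm, hm, lt_of_le_of_ne (hmax j hj) fun he => hne ((ω.2 i0).injective he)⟩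
  · rintro rfl
    refine ⟨hm, ?_⟩
    rintro ⟨j', hj', hlt⟩
    exact absurd (hmax j' hj') (not_le.2 hlt)

lemma rows_univ_const (ω : Omega 2 n) {Y : Finset (Fin n)} (hY : Y.Nonempty) (i0 : Fin 2)
    (hc : ∀ j ∈ Y, fav (ω.1 j) = i0) :
    (univ.filter fun i => ¬ RowDomIn (RPay ω) univ Y i) = {i0} := by
  ext i
  simp only [mem_filter, mem_univ, true_and, mem_singleton]
  rw [rowDom_univ_iff ω Y hY]
  constructor
  · intro h
    by_contra hne
    rcases fin2_cases i0 i with h' | h'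
    · exact hne h'.symm
    · exact h fun j hj => (hc j hj).trans h'
  · rintro rfl
    intro hAll
    obtain ⟨j, hj⟩ := hY
    exact other_ne _ ((hAll j hj).symm.trans (hc j hj))

lemma rows_univ_nonconst (ω : Omega 2 n) {Y : Finset (Fin n)} (hY : Y.Nonempty)
    (hc : ¬ ∃ i, ∀ j ∈ Y, fav (ω.1 j) = i) :
    (univ.filter fun i => ¬ RowDomIn (RPay ω) univ Y i) = univ := by
  rw [filter_eq_self]
  intro i _
  rw [rowDom_univ_iff ω Y hY]
  intro hAll
  exact hc ⟨other i, hAll⟩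

lemma rows_single (ω : Omega 2 n) (i0 : Fin 2) {Y : Finset (Fin n)} (hY : Y.Nonempty) :
    (({i0} : Finset (Fin 2)).filter fun i => ¬ RowDomIn (RPay ω) {i0} Y i) = {i0} := by
  rw [filter_eq_self]
  intro i hi
  rw [mem_singleton] at hi; subst hi
  rintro ⟨i', hi', h⟩
  rw [mem_singleton] at hi'; subst hi'
  obtain ⟨j, hj⟩ := hY
  exact lt_irrefl _ (h j hj)

lemma step_00_const (ω : Omega 2 n) (hn : 1 ≤ n) {i0 : Fin 2} (hc : ∀ j, fav (ω.1 j) = i0) :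
    elimStep (RPay ω) (CPay ω) (univ, univ) = ({i0}, Fset ω.2) := by
  have hY : (univ : Finset (Fin n)).Nonempty := ⟨⟨0, hn⟩, mem_univ _⟩
  exact Prod.ext_iff.mpr ⟨rows_univ_const ω hY i0 fun j _ => hc j, cols_univ_univ ω⟩

lemma step_00_nonconst (ω : Omega 2 n) (hn : 1 ≤ n) (hc : ¬ ∃ i, ∀ j, fav (ω.1 j) = i) :
    elimStep (RPay ω) (CPay ω) (univ, univ) = (univ, Fset ω.2) := by
  have hY : (univ : Finset (Fin n)).Nonempty := ⟨⟨0, hn⟩, mem_univ _⟩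
  refine Prod.ext_iff.mpr ⟨rows_univ_nonconst ω hY ?_, cols_univ_univ ω⟩
  rintro ⟨i, hi⟩
  exact hc ⟨i, fun j => hi j (mem_univ _)⟩

lemma step_univ_F_const (ω : Omega 2 n) (hn : 1 ≤ n) {i0 : Fin 2}
    (hc : ∀ j ∈ Fset ω.2, fav (ω.1 j) = i0) :
    elimStep (RPay ω) (CPay ω) (univ, Fset ω.2) = ({i0}, Fset ω.2) :=
  Prod.ext_iff.mpr ⟨rows_univ_const ω (Fset_nonempty hn _) i0 hc, cols_sub_F ω (Finset.Subset.refl _)⟩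

lemma step_univ_F_nonconst (ω : Omega 2 n) (hn : 1 ≤ n)
    (hc : ¬ ∃ i, ∀ j ∈ Fset ω.2, fav (ω.1 j) = i) :
    elimStep (RPay ω) (CPay ω) (univ, Fset ω.2) = (univ, Fset ω.2) :=
  Prod.ext_iff.mpr ⟨rows_univ_nonconst ω (Fset_nonempty hn _) hc, cols_sub_F ω (Finset.Subset.refl _)⟩

lemma step_single (ω : Omega 2 n) (i0 : Fin 2) {Y : Finset (Fin n)} (hY : Y.Nonempty) :
    ∃ jm ∈ Y, elimStep (RPay ω) (CPay ω) ({i0}, Y) = ({i0}, {jm}) := by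
  obtain ⟨jm, hm, hcols⟩ := cols_single ω i0 hY
  exact ⟨jm, hm, Prod.ext_iff.mpr ⟨rows_single ω i0 hY, hcols⟩⟩

lemma step_single_single (ω : Omega 2 n) (i0 : Fin 2) (j0 : Fin n) :
    elimStep (RPay ω) (CPay ω) ({i0}, {j0}) = ({i0}, {j0}) := by
  obtain ⟨jm, hm, h⟩ := step_single ω i0 (Finset.singleton_nonempty j0)
  rw [mem_singleton] at hm
  rw [h, hm]

/-- abbreviation for the elimination map of the realized game -/
noncomputable def ES (ω : Omega 2 n) :
    Finset (Fin 2) × Finset (Fin n) → Finset (Fin 2) × Finset (Fin n) :=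
  elimStep (RPay ω) (CPay ω)

lemma survivors_eq (ω : Omega 2 n) {t : Finset (Fin 2) × Finset (Fin n)} (r : ℕ)
    (hr : r ≤ 2 + n)
    (h1 : (ES ω)^[r] (univ, univ) = t)
    (h2 : ES ω t = t) :
    survivors (RPay ω) (CPay ω) = t := by
  show (elimStep (RPay ω) (CPay ω))^[2 + n] (univ, univ) = t
  show (ES ω)^[2 + n] (univ, univ) = t
  rw [show 2 + n = (2 + n - r) + r from (Nat.sub_add_cancel hr).symm,
    Function.iterate_add_apply, h1, Function.iterate_fixed h2]

lemma elimRounds_eq (ω : Omega 2 n) (r : ℕ)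
    (hmem : (ES ω)^[r + 1] (univ, univ) = (ES ω)^[r] (univ, univ))
    (hlt : ∀ k < r, (ES ω)^[k + 1] (univ, univ) ≠ (ES ω)^[k] (univ, univ)) :
    elimRounds (RPay ω) (CPay ω) = r := by
  show sInf {k | (ES ω)^[k + 1] (univ, univ) = (ES ω)^[k] (univ, univ)} = r
  refine le_antisymm (Nat.sInf_le hmem) ?_
  by_contra hlt'
  push_neg at hlt'
  have hmem' : sInf {k | (ES ω)^[k + 1] (univ, univ) = (ES ω)^[k] (univ, univ)}
      ∈ {k | (ES ω)^[k + 1] (univ, univ) = (ES ω)^[k] (univ, univ)} := Nat.sInf_mem ⟨r, hmem⟩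
  exact hlt _ hlt' hmem'


lemma gameSolvable_def (ω : Omega 2 n) :
    GameSolvable ω ↔ (survivors (RPay ω) (CPay ω)).1.card = 1 ∧
      (survivors (RPay ω) (CPay ω)).2.card = 1 := Iff.rfl

lemma gameRounds_def (ω : Omega 2 n) :
    GameRounds ω = elimRounds (RPay ω) (CPay ω) := rfl

lemma main_dyn (ω : Omega 2 n) (hn : 1 ≤ n) :
    (GameSolvable ω ↔ ∃ i, ∀ j ∈ Fset ω.2, fav (ω.1 j) = i) ∧
    ((∃ i, ∀ j ∈ Fset ω.2, fav (ω.1 j) = i) →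
      GameRounds ω + (if ∃ i, ∀ j, fav (ω.1 j) = i then 1 else 0)
        + (if (Fset ω.2).card = 1 then 1 else 0) = 3) := by
  classical
  have card2 : (univ : Finset (Fin 2)).card = 2 := by simp
  by_cases hF : ∃ i, ∀ j ∈ Fset ω.2, fav (ω.1 j) = i
  · obtain ⟨i0, hi0⟩ := hF
    by_cases hall : ∃ i, ∀ j, fav (ω.1 j) = i
    · obtain ⟨i1, h1⟩ := hall
      have E1 : ES ω (univ, univ) = ({i1}, Fset ω.2) := step_00_const ω hn h1
      by_cases hK : (Fset ω.2).card = 1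
      · obtain ⟨j0, hj0⟩ := Finset.card_eq_one.1 hK
        have E2 : ES ω ({i1}, Fset ω.2) = ({i1}, Fset ω.2) := by
          rw [hj0]; exact step_single_single ω i1 j0
        have hsv : survivors (RPay ω) (CPay ω) = ({i1}, Fset ω.2) :=
          survivors_eq ω 1 (by omega) (by rw [Function.iterate_one]; exact E1) E2
        have hsolv : GameSolvable ω := by
          rw [gameSolvable_def, hsv]; exact ⟨Finset.card_singleton _, hK⟩
        have hr : elimRounds (RPay ω) (CPay ω) = 1 := by
          apply elimRounds_eq ω 1
          · have h2 : (ES ω)^[2] (univ, univ) = ES ω (ES ω (univ, univ)) := rfl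
            have h1' : (ES ω)^[1] (univ, univ) = ES ω (univ, univ) := rfl
            rw [show (1:ℕ)+1 = 2 from rfl, h2, h1', E1, E2]
          · intro k hk
            interval_cases k
            intro h
            rw [show (0:ℕ)+1 = 1 from rfl, Function.iterate_one, Function.iterate_zero_apply, E1] at h
            exact univ2_ne_single i1 (congrArg Prod.fst h)
        refine ⟨iff_of_true hsolv ⟨i0, hi0⟩, fun _ => ?_⟩
        rw [gameRounds_def, hr, if_pos ⟨i1, h1⟩, if_pos hK]
      · obtain ⟨jm, hjm, E2⟩ := step_single ω i1 (Fset_nonempty hn ω.2)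
        have E2' : ES ω ({i1}, Fset ω.2) = ({i1}, {jm}) := E2
        have E3 : ES ω ({i1}, {jm}) = ({i1}, {jm}) := step_single_single ω i1 jm
        have hne2 : ({jm} : Finset (Fin n)) ≠ Fset ω.2 := fun h =>
          hK (by rw [← h, Finset.card_singleton])
        have hit2 : (ES ω)^[2] (univ, univ) = ({i1}, {jm}) := by
          have h2 : (ES ω)^[2] (univ, univ) = ES ω (ES ω (univ, univ)) := rfl
          rw [h2, E1, E2']
        have hsv : survivors (RPay ω) (CPay ω) = ({i1}, {jm}) :=
          survivors_eq ω 2 (by omega) hit2 E3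
        have hsolv : GameSolvable ω := by
          rw [gameSolvable_def, hsv]
          exact ⟨Finset.card_singleton _, Finset.card_singleton _⟩
        have hr : elimRounds (RPay ω) (CPay ω) = 2 := by
          apply elimRounds_eq ω 2
          · have h3 : (ES ω)^[3] (univ, univ) = ES ω ((ES ω)^[2] (univ, univ)) := rfl
            rw [show (2:ℕ)+1 = 3 from rfl, h3, hit2, E3]
          · intro k hk
            interval_cases k
            · intro h
              rw [show (0:ℕ)+1 = 1 from rfl, Function.iterate_one, Function.iterate_zero_apply, E1] at h
              exact univ2_ne_single i1 (congrArg Prod.fst h)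
            · intro h
              rw [show (1:ℕ)+1 = 2 from rfl, hit2, Function.iterate_one, E1] at h
              exact hne2 (congrArg Prod.snd h)
        refine ⟨iff_of_true hsolv ⟨i0, hi0⟩, fun _ => ?_⟩
        rw [gameRounds_def, hr, if_pos ⟨i1, h1⟩, if_neg hK]
    · have E1 : ES ω (univ, univ) = (univ, Fset ω.2) := step_00_nonconst ω hn hall
      have E2 : ES ω (univ, Fset ω.2) = ({i0}, Fset ω.2) := step_univ_F_const ω hn hi0
      have hFneuniv : Fset ω.2 ≠ univ := fun h =>
        hall ⟨i0, fun j => hi0 j (by rw [h]; exact mem_univ j)⟩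
      have hit2 : (ES ω)^[2] (univ, univ) = ({i0}, Fset ω.2) := by
        have h2 : (ES ω)^[2] (univ, univ) = ES ω (ES ω (univ, univ)) := rfl
        rw [h2, E1, E2]
      by_cases hK : (Fset ω.2).card = 1
      · obtain ⟨j0, hj0⟩ := Finset.card_eq_one.1 hK
        have E3 : ES ω ({i0}, Fset ω.2) = ({i0}, Fset ω.2) := by
          rw [hj0]; exact step_single_single ω i0 j0
        have hsv : survivors (RPay ω) (CPay ω) = ({i0}, Fset ω.2) :=
          survivors_eq ω 2 (by omega) hit2 E3
        have hsolv : GameSolvable ω := by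
          rw [gameSolvable_def, hsv]; exact ⟨Finset.card_singleton _, hK⟩
        have hr : elimRounds (RPay ω) (CPay ω) = 2 := by
          apply elimRounds_eq ω 2
          · have h3 : (ES ω)^[3] (univ, univ) = ES ω ((ES ω)^[2] (univ, univ)) := rfl
            rw [show (2:ℕ)+1 = 3 from rfl, h3, hit2, E3]
          · intro k hk
            interval_cases k
            · intro h
              rw [show (0:ℕ)+1 = 1 from rfl, Function.iterate_one, Function.iterate_zero_apply, E1] at h
              exact hFneuniv (congrArg Prod.snd h)
            · intro h
              rw [show (1:ℕ)+1 = 2 from rfl, hit2, Function.iterate_one, E1] at h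
              exact univ2_ne_single i0 (congrArg Prod.fst h)
        refine ⟨iff_of_true hsolv ⟨i0, hi0⟩, fun _ => ?_⟩
        rw [gameRounds_def, hr, if_neg hall, if_pos hK]
      · obtain ⟨jm, hjm, E3⟩ := step_single ω i0 (Fset_nonempty hn ω.2)
        have E3' : ES ω ({i0}, Fset ω.2) = ({i0}, {jm}) := E3
        have E4 : ES ω ({i0}, {jm}) = ({i0}, {jm}) := step_single_single ω i0 jm
        have hne2 : ({jm} : Finset (Fin n)) ≠ Fset ω.2 := fun h =>
          hK (by rw [← h, Finset.card_singleton])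
        have hit3 : (ES ω)^[3] (univ, univ) = ({i0}, {jm}) := by
          have h3 : (ES ω)^[3] (univ, univ) = ES ω ((ES ω)^[2] (univ, univ)) := rfl
          rw [h3, hit2, E3']
        have hsv : survivors (RPay ω) (CPay ω) = ({i0}, {jm}) :=
          survivors_eq ω 3 (by omega) hit3 E4
        have hsolv : GameSolvable ω := by
          rw [gameSolvable_def, hsv]
          exact ⟨Finset.card_singleton _, Finset.card_singleton _⟩
        have hr : elimRounds (RPay ω) (CPay ω) = 3 := by
          apply elimRounds_eq ω 3
          · have h4 : (ES ω)^[4] (univ, univ) = ES ω ((ES ω)^[3] (univ, univ)) := rfl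
            rw [show (3:ℕ)+1 = 4 from rfl, h4, hit3, E4]
          · intro k hk
            interval_cases k
            · intro h
              rw [show (0:ℕ)+1 = 1 from rfl, Function.iterate_one, Function.iterate_zero_apply, E1] at h
              exact hFneuniv (congrArg Prod.snd h)
            · intro h
              rw [show (1:ℕ)+1 = 2 from rfl, hit2, Function.iterate_one, E1] at h
              exact univ2_ne_single i0 (congrArg Prod.fst h)
            · intro h
              rw [show (2:ℕ)+1 = 3 from rfl, hit3, hit2] at h
              exact hne2 (congrArg Prod.snd h)
        refine ⟨iff_of_true hsolv ⟨i0, hi0⟩, fun _ => ?_⟩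
        rw [gameRounds_def, hr, if_neg hall, if_neg hK]
  · have hnall : ¬ ∃ i, ∀ j, fav (ω.1 j) = i := fun ⟨i, h⟩ => hF ⟨i, fun j _ => h j⟩
    have E1 : ES ω (univ, univ) = (univ, Fset ω.2) := step_00_nonconst ω hn hnall
    have E2 : ES ω (univ, Fset ω.2) = (univ, Fset ω.2) := step_univ_F_nonconst ω hn hF
    have hsv : survivors (RPay ω) (CPay ω) = (univ, Fset ω.2) :=
      survivors_eq ω 1 (by omega) (by rw [Function.iterate_one]; exact E1) E2
    have hns : ¬ GameSolvable ω := by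
      rw [gameSolvable_def, hsv]
      rintro ⟨h1, -⟩
      rw [card2] at h1
      omega
    exact ⟨iff_of_false hns hF, fun h => absurd h hF⟩
end Stmt5Aux
namespace Stmt5Aux
open Finset Equiv Classical

variable {n : ℕ}

/-- right-to-left maxima (records) of a permutation -/
def Rec (τ : Equiv.Perm (Fin n)) : Finset (Fin n) :=
  univ.filter fun a => ∀ a', a < a' → τ a' < τ a

lemma mem_Rec {τ : Equiv.Perm (Fin n)} {a : Fin n} :
    a ∈ Rec τ ↔ ∀ a', a < a' → τ a' < τ a := by simp [Rec]

lemma Rec_card_le (τ : Equiv.Perm (Fin n)) : (Rec τ).card ≤ n :=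
  le_trans (Finset.card_filter_le _ _) (by simp)

lemma Rec_card_pos (hn : 1 ≤ n) (τ : Equiv.Perm (Fin n)) : 1 ≤ (Rec τ).card := by
  refine Finset.card_pos.2 ⟨⟨n-1, by omega⟩, mem_Rec.2 fun a' h => ?_⟩
  have h1 := a'.isLt
  have h2 : (n:ℕ) - 1 < a'.val := h
  omega

lemma card_Fp (α β : Equiv.Perm (Fin n)) : (Fp α β).card = (Rec (β * α⁻¹)).card := by
  apply Finset.card_bij (fun j _ => α j)
  · intro j hj
    rw [mem_Rec]
    intro a' hlt
    have hlt' : α j < α (α⁻¹ a') := by rwa [Equiv.Perm.coe_inv, Equiv.apply_symm_apply]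
    have h := mem_Fp.1 hj (α⁻¹ a') hlt'
    have hne : β (α⁻¹ a') ≠ β j := by
      intro he
      have h2 : α⁻¹ a' = j := β.injective he
      rw [h2] at hlt'
      exact lt_irrefl _ hlt'
    show β (α⁻¹ a') < β (α⁻¹ (α j))
    rw [Equiv.Perm.coe_inv, Equiv.symm_apply_apply]
    exact lt_of_le_of_ne (not_lt.1 h) hne
  · intro j1 h1 j2 h2 he
    exact α.injective he
  · intro a ha
    refine ⟨α⁻¹ a, ?_, by rw [Equiv.Perm.coe_inv, Equiv.apply_symm_apply]⟩
    rw [mem_Fp]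
    intro j' hlt hbb
    rw [Equiv.Perm.coe_inv, Equiv.apply_symm_apply] at hlt
    have h := mem_Rec.1 ha (α j') hlt
    have h2 : (β * α⁻¹) (α j') = β j' := by
      rw [Equiv.Perm.mul_apply, Equiv.Perm.coe_inv, Equiv.symm_apply_apply]
    rw [h2] at h
    exact absurd hbb (not_lt.2 (le_of_lt h))

/-- insertion of a value `p` at the front of (the relabelled) permutation `σ` -/
def ins (p : Fin (n+1)) (σ : Equiv.Perm (Fin n)) : Equiv.Perm (Fin (n+1)) :=
  (finSuccEquiv n).trans (σ.optionCongr.trans (finSuccEquiv' p).symm)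

lemma ins_zero (p : Fin (n+1)) (σ : Equiv.Perm (Fin n)) : ins p σ 0 = p := by
  simp [ins]

lemma ins_succ (p : Fin (n+1)) (σ : Equiv.Perm (Fin n)) (a : Fin n) :
    ins p σ a.succ = p.succAbove (σ a) := by
  simp [ins]

lemma ins_bijective :
    Function.Bijective (fun q : Fin (n+1) × Equiv.Perm (Fin n) => ins q.1 q.2) := by
  rw [Fintype.bijective_iff_injective_and_card]
  constructor
  · rintro ⟨p, σ⟩ ⟨p', σ'⟩ he
    simp only at he
    have hp : p = p' := by rw [← ins_zero p σ, he, ins_zero]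
    subst hp
    have hσ : σ = σ' := by
      apply Equiv.ext
      intro a
      have h2 := congrArg (fun π : Equiv.Perm (Fin (n+1)) => π a.succ) he
      simp only [ins_succ] at h2
      exact Fin.succAbove_right_injective h2
    rw [hσ]
  · simp [Fintype.card_perm, Nat.factorial_succ]

lemma rec_ins_card (p : Fin (n+1)) (σ : Equiv.Perm (Fin n)) :
    (Rec (ins p σ)).card = (Rec σ).card + (if p = Fin.last n then 1 else 0) := by
  classical
  have h0 : (∀ a', (0 : Fin (n+1)) < a' → ins p σ a' < ins p σ 0) ↔ p = Fin.last n := by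
    constructor
    · intro h
      by_contra hne
      obtain ⟨y, hy⟩ := Fin.exists_succAbove_eq (Ne.symm hne : Fin.last n ≠ p)
      have h2 := h (σ⁻¹ y).succ (Fin.succ_pos _)
      rw [ins_succ, Equiv.Perm.coe_inv, Equiv.apply_symm_apply, hy, ins_zero] at h2
      exact absurd h2 (not_lt.2 (Fin.le_last p))
    · rintro rfl a' ha'
      have h0' : a' ≠ 0 := ne_of_gt ha'
      obtain ⟨b, rfl⟩ := Fin.exists_succ_eq.2 h0'
      rw [ins_succ, ins_zero, Fin.succAbove_last]
      exact Fin.castSucc_lt_last _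
  have hsucc : ∀ a : Fin n,
      ((∀ a', a.succ < a' → ins p σ a' < ins p σ a.succ) ↔ ∀ b, a < b → σ b < σ a) := by
    intro a
    constructor
    · intro h b hb
      have h2 := h b.succ (Fin.succ_lt_succ_iff.2 hb)
      rw [ins_succ, ins_succ] at h2
      exact Fin.succAbove_lt_succAbove_iff.1 h2
    · intro h a' ha'
      have h0' : a' ≠ 0 := ne_of_gt (lt_trans (Fin.succ_pos a) ha')
      obtain ⟨b, rfl⟩ := Fin.exists_succ_eq.2 h0'
      rw [ins_succ, ins_succ]
      exact Fin.succAbove_lt_succAbove_iff.2 (h b (Fin.succ_lt_succ_iff.1 ha'))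
  rw [Rec, Rec, Finset.card_filter, Finset.card_filter, Fin.sum_univ_succ]
  rw [if_congr h0 rfl rfl]
  rw [Finset.sum_congr rfl fun a _ => if_congr (hsucc a) rfl rfl]
  rw [add_comm]

/-- the odd double factorial `(2n-1)!!` -/
def Df (m : ℕ) : ℕ := ∏ i ∈ Finset.range m, (2*i+1)

lemma Df_pos (m : ℕ) : 0 < Df m := Finset.prod_pos fun i _ => by omega

lemma sum_two_pow_rec : ∀ m : ℕ, (∑ τ : Equiv.Perm (Fin m), 2 ^ (m - (Rec τ).card)) = Df m := by
  intro m
  induction m with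
  | zero =>
    have h1 : ∀ τ : Equiv.Perm (Fin 0), (2:ℕ) ^ (0 - (Rec τ).card) = 1 := by
      intro τ
      have := Rec_card_le τ
      interval_cases h : (Rec τ).card
      rfl
    rw [Finset.sum_congr rfl fun τ _ => h1 τ, Finset.sum_const, Finset.card_univ]
    simp [Fintype.card_perm, Df]
  | succ k ih =>
    rw [← Fintype.sum_bijective _ ins_bijective
      (fun q : Fin (k+1) × Equiv.Perm (Fin k) => 2 ^ ((k+1) - (Rec (ins q.1 q.2)).card))
      (fun τ => 2 ^ ((k+1) - (Rec τ).card)) (fun q => rfl)]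
    rw [Fintype.sum_prod_type]
    have hstep : ∀ p : Fin (k+1),
        (∑ σ : Equiv.Perm (Fin k), 2 ^ ((k+1) - (Rec (ins p σ)).card))
          = if p = Fin.last k then Df k else 2 * Df k := by
      intro p
      by_cases hp : p = Fin.last k
      · rw [if_pos hp, ← ih]
        apply Finset.sum_congr rfl
        intro σ _
        rw [rec_ins_card, if_pos hp]
        congr 1
        have := Rec_card_le σ
        omega
      · rw [if_neg hp, ← ih, Finset.mul_sum]
        apply Finset.sum_congr rfl
        intro σ _
        rw [rec_ins_card, if_neg hp]
        have := Rec_card_le σ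
        rw [show (k+1) - ((Rec σ).card + 0) = (k - (Rec σ).card) + 1 by omega, pow_succ]
        ring
    rw [Finset.sum_congr rfl fun p _ => hstep p,
      ← Finset.add_sum_erase _ _ (mem_univ (Fin.last k)), if_pos rfl]
    have herase : ∀ p ∈ univ.erase (Fin.last k),
        (if p = Fin.last k then Df k else 2 * Df k) = 2 * Df k := by
      intro p hp
      rw [if_neg (Finset.ne_of_mem_erase hp)]
    rw [Finset.sum_congr rfl herase, Finset.sum_const,
      Finset.card_erase_of_mem (mem_univ _), Finset.card_univ, Fintype.card_fin,
      Nat.add_sub_cancel, smul_eq_mul]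
    rw [show Df (k+1) = Df k * (2*k+1) from Finset.prod_range_succ _ k]
    ring

lemma count_rec_one : ∀ m : ℕ, 1 ≤ m →
    (∑ τ : Equiv.Perm (Fin m), if (Rec τ).card = 1 then 1 else 0) = (m-1).factorial := by
  intro m
  induction m with
  | zero => intro h; omega
  | succ k ih =>
    intro _
    rcases Nat.eq_or_lt_of_le (Nat.zero_le k) with hk0 | hk1
    · -- k = 0 : base case m = 1
      subst hk0
      have h1 : ∀ τ : Equiv.Perm (Fin 1), (Rec τ).card = 1 := by
        intro τ
        have hrec : Rec τ = univ := by
          apply Finset.eq_univ_iff_forall.2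
          intro a
          refine mem_Rec.2 fun a' h => absurd h ?_
          have h1 := a.isLt
          have h2 := a'.isLt
          intro hlt
          have h3 : a.val < a'.val := hlt
          omega
        rw [hrec, Finset.card_univ, Fintype.card_fin]
      rw [Finset.sum_congr rfl fun τ _ => if_pos (h1 τ), Finset.sum_const, Finset.card_univ]
      simp [Fintype.card_perm]
    · -- k ≥ 1
      have hk : 1 ≤ k := hk1
      rw [← Fintype.sum_bijective _ ins_bijective
        (fun q : Fin (k+1) × Equiv.Perm (Fin k) =>
          if (Rec (ins q.1 q.2)).card = 1 then 1 else 0)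
        (fun τ => if (Rec τ).card = 1 then 1 else 0) (fun q => rfl)]
      rw [Fintype.sum_prod_type]
      have hstep : ∀ p : Fin (k+1),
          (∑ σ : Equiv.Perm (Fin k), if (Rec (ins p σ)).card = 1 then (1:ℕ) else 0)
            = if p = Fin.last k then 0 else (k-1).factorial := by
        intro p
        by_cases hp : p = Fin.last k
        · rw [if_pos hp]
          apply Finset.sum_eq_zero
          intro σ _
          rw [rec_ins_card, if_pos hp, if_neg]
          have := Rec_card_pos hk σ
          omega
        · rw [if_neg hp, ← ih hk]
          apply Finset.sum_congr rfl
          intro σ _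
          rw [rec_ins_card, if_neg hp, Nat.add_zero]
      rw [Finset.sum_congr rfl fun p _ => hstep p,
        ← Finset.add_sum_erase _ _ (mem_univ (Fin.last k)), if_pos rfl]
      have herase : ∀ p ∈ univ.erase (Fin.last k),
          (if p = Fin.last k then 0 else (k-1).factorial) = (k-1).factorial := by
        intro p hp
        rw [if_neg (Finset.ne_of_mem_erase hp)]
      rw [Finset.sum_congr rfl herase, Finset.sum_const,
        Finset.card_erase_of_mem (mem_univ _), Finset.card_univ, Fintype.card_fin,
        Nat.add_sub_cancel, smul_eq_mul, Nat.zero_add]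
      exact Nat.mul_factorial_pred (by omega)

end Stmt5Aux
namespace Stmt5Aux
open Finset Equiv Classical

variable {n : ℕ}

lemma card2P : Fintype.card P2 = 2 := by simp [Fintype.card_perm]

lemma favconst_iff (b : Fin n → P2) (Y : Finset (Fin n)) :
    (∃ i, ∀ j ∈ Y, fav (b j) = i) ↔ (∃ c, ∀ j ∈ Y, b j = c) := by
  constructor
  · rintro ⟨i, h⟩
    obtain ⟨c, hc⟩ := exists_fav i
    exact ⟨c, fun j hj => fav_inj _ _ ((h j hj).trans hc.symm)⟩
  · rintro ⟨c, h⟩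
    exact ⟨fav c, fun j hj => by rw [h j hj]⟩

lemma card_filter_eqOn (F : Finset (Fin n)) (c : P2) :
    (univ.filter fun b : Fin n → P2 => ∀ j ∈ F, b j = c).card = 2 ^ (n - F.card) := by
  classical
  have hset : (univ.filter fun b : Fin n → P2 => ∀ j ∈ F, b j = c)
      = Fintype.piFinset (fun j => if j ∈ F then ({c} : Finset P2) else univ) := by
    ext b
    simp only [mem_filter, mem_univ, true_and, Fintype.mem_piFinset]
    constructor
    · intro h j
      by_cases hj : j ∈ F
      · rw [if_pos hj, mem_singleton]; exact h j hj
      · rw [if_neg hj]; exact mem_univ _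
    · intro h j hj
      have h2 := h j
      rw [if_pos hj, mem_singleton] at h2
      exact h2
  rw [hset, Fintype.card_piFinset]
  have h1 : ∀ j : Fin n, (if j ∈ F then ({c} : Finset P2) else univ).card
      = if j ∈ F then 1 else 2 := by
    intro j
    by_cases hj : j ∈ F
    · rw [if_pos hj, if_pos hj, card_singleton]
    · rw [if_neg hj, if_neg hj, card_univ, card2P]
  rw [Finset.prod_congr rfl fun j _ => h1 j, ← Finset.prod_mul_prod_compl F]
  rw [Finset.prod_congr rfl (fun j hj => if_pos hj), Finset.prod_const_one, one_mul]
  rw [Finset.prod_congr rfl (fun j (hj : j ∈ Fᶜ) => if_neg (Finset.mem_compl.1 hj)),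
    Finset.prod_const, Finset.card_compl, Fintype.card_fin]

lemma sum_ind_eqOn (F : Finset (Fin n)) (hF : F.Nonempty) :
    (∑ b : Fin n → P2, if ∃ c, ∀ j ∈ F, b j = c then (1:ℝ) else 0)
      = 2 * 2 ^ (n - F.card) := by
  classical
  have point : ∀ b : Fin n → P2, (if ∃ c, ∀ j ∈ F, b j = c then (1:ℝ) else 0)
      = ∑ c : P2, (if ∀ j ∈ F, b j = c then (1:ℝ) else 0) := by
    intro b
    by_cases h : ∃ c, ∀ j ∈ F, b j = c
    · obtain ⟨c0, hc0⟩ := h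
      rw [if_pos ⟨c0, hc0⟩, Finset.sum_eq_single c0]
      · rw [if_pos hc0]
      · intro c _ hne
        rw [if_neg]
        intro hc
        obtain ⟨j, hj⟩ := hF
        exact hne ((hc j hj).symm.trans (hc0 j hj))
      · intro hc0'
        exact absurd (mem_univ c0) hc0'
    · rw [if_neg h]
      symm
      apply Finset.sum_eq_zero
      intro c _
      rw [if_neg fun hc => h ⟨c, hc⟩]
  rw [Finset.sum_congr rfl fun b _ => point b, Finset.sum_comm]
  have inner : ∀ c : P2, (∑ b : Fin n → P2, if ∀ j ∈ F, b j = c then (1:ℝ) else 0)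
      = 2 ^ (n - F.card) := by
    intro c
    rw [Finset.sum_boole, card_filter_eqOn F c]
    push_cast
    ring
  rw [Finset.sum_congr rfl fun c _ => inner c, Finset.sum_const, card_univ, card2P,
    nsmul_eq_mul]
  norm_num

lemma sum_sigma (g : ℕ → ℝ) :
    (∑ σ : Fin 2 → Equiv.Perm (Fin n), g (Fset σ).card)
      = (n.factorial : ℝ) * ∑ τ : Equiv.Perm (Fin n), g (Rec τ).card := by
  have h1 : (∑ σ : Fin 2 → Equiv.Perm (Fin n), g (Fset σ).card)
      = ∑ q : Equiv.Perm (Fin n) × Equiv.Perm (Fin n), g (Fp q.1 q.2).card :=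
    Fintype.sum_equiv (piFinTwoEquiv fun _ => Equiv.Perm (Fin n)) _ _ (fun σ => rfl)
  rw [h1, Fintype.sum_prod_type]
  have h2 : ∀ α : Equiv.Perm (Fin n),
      (∑ β : Equiv.Perm (Fin n), g (Fp α β).card)
        = ∑ τ : Equiv.Perm (Fin n), g (Rec τ).card := by
    intro α
    apply Fintype.sum_equiv (Equiv.mulRight α⁻¹)
    intro β
    rw [card_Fp]
    rfl
  rw [Finset.sum_congr rfl fun α _ => h2 α, Finset.sum_const, card_univ,
    Fintype.card_perm, Fintype.card_fin, nsmul_eq_mul]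

lemma sum_omega (f : Omega 2 n → ℝ) :
    (∑ ω : Omega 2 n, f ω) = ∑ σ : Fin 2 → Equiv.Perm (Fin n), ∑ b : Fin n → P2, f (b, σ) := by
  rw [Fintype.sum_prod_type]
  exact Finset.sum_comm

lemma gamma_half (k : ℕ) :
    Real.Gamma ((k:ℝ) + 1/2) = Real.sqrt Real.pi * (Df k : ℝ) / 2^k := by
  induction k with
  | zero =>
    rw [show ((0:ℕ):ℝ) + 1/2 = 1/2 by norm_num, Real.Gamma_one_half_eq]
    simp [Df]
  | succ m ih =>
    have key : ((m+1 : ℕ):ℝ) + 1/2 = ((m:ℝ) + 1/2) + 1 := by push_cast; ring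
    have hne : ((m:ℝ) + 1/2) ≠ 0 := by positivity
    rw [key, Real.Gamma_add_one hne, ih]
    have hDf : (Df (m+1) : ℝ) = (Df m : ℝ) * (2*(m:ℝ)+1) := by
      rw [show Df (m+1) = Df m * (2*m+1) from Finset.prod_range_succ _ m]
      push_cast
      ring
    rw [hDf, pow_succ]
    field_simp

end Stmt5Aux
namespace Stmt5Aux
open Finset Equiv Classical

variable {n : ℕ}

lemma SD_val (hn : 1 ≤ n) :
    (∑ ω : Omega 2 n, if GameSolvable ω then (1:ℝ) else 0)
      = (n.factorial : ℝ) * (2 * (Df n : ℝ)) := by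
  classical
  have hpt : ∀ ω : Omega 2 n, (if GameSolvable ω then (1:ℝ) else 0)
      = if ∃ c, ∀ j ∈ Fset ω.2, ω.1 j = c then (1:ℝ) else 0 := by
    intro ω
    have hiff := (main_dyn ω hn).1
    rw [favconst_iff] at hiff
    exact if_congr hiff rfl rfl
  rw [Finset.sum_congr rfl fun ω _ => hpt ω, sum_omega]
  have hinner : ∀ σ : Fin 2 → Equiv.Perm (Fin n),
      (∑ b : Fin n → P2, if ∃ c, ∀ j ∈ Fset σ, b j = c then (1:ℝ) else 0)
        = 2 * 2 ^ (n - (Fset σ).card) := fun σ => sum_ind_eqOn _ (Fset_nonempty hn σ)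
  rw [Finset.sum_congr rfl fun σ _ => hinner σ]
  have hs := sum_sigma (n := n) (fun k => (2:ℝ) * 2 ^ (n - k))
  rw [hs]
  congr 1
  have hcast : ∀ τ : Equiv.Perm (Fin n), (2:ℝ) * 2 ^ (n - (Rec τ).card)
      = ((2 * 2 ^ (n - (Rec τ).card) : ℕ) : ℝ) := by
    intro τ; push_cast; ring
  rw [Finset.sum_congr rfl fun τ _ => hcast τ, ← Nat.cast_sum]
  rw [show (∑ τ : Equiv.Perm (Fin n), 2 * 2 ^ (n - (Rec τ).card)) = 2 * Df n from by
    rw [← Finset.mul_sum, sum_two_pow_rec]]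
  push_cast
  ring

lemma SA_val (hn : 1 ≤ n) :
    (∑ ω : Omega 2 n, if ∃ c : P2, ∀ j, ω.1 j = c then (1:ℝ) else 0)
      = ((n.factorial : ℝ) * (n.factorial : ℝ)) * 2 := by
  classical
  rw [sum_omega]
  have hinner : ∀ σ : Fin 2 → Equiv.Perm (Fin n),
      (∑ b : Fin n → P2, if ∃ c : P2, ∀ j, b j = c then (1:ℝ) else 0) = 2 := by
    intro σ
    have hpt : ∀ b : Fin n → P2, (if ∃ c : P2, ∀ j, b j = c then (1:ℝ) else 0)
        = if ∃ c : P2, ∀ j ∈ (univ : Finset (Fin n)), b j = c then (1:ℝ) else 0 := by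
      intro b
      refine if_congr ?_ rfl rfl
      constructor
      · rintro ⟨c, h⟩; exact ⟨c, fun j _ => h j⟩
      · rintro ⟨c, h⟩; exact ⟨c, fun j => h j (mem_univ j)⟩
    rw [Finset.sum_congr rfl fun b _ => hpt b, sum_ind_eqOn _ ⟨⟨0, hn⟩, mem_univ _⟩]
    rw [card_univ, Fintype.card_fin, Nat.sub_self, pow_zero, mul_one]
  rw [Finset.sum_congr rfl fun σ _ => hinner σ, Finset.sum_const, card_univ]
  rw [show Fintype.card (Fin 2 → Equiv.Perm (Fin n)) = n.factorial * n.factorial from by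
    simp [Fintype.card_fun, Fintype.card_perm, sq]]
  rw [nsmul_eq_mul]
  push_cast
  ring

lemma SB_val (hn : 1 ≤ n) :
    (∑ ω : Omega 2 n, if (Fset ω.2).card = 1 then (1:ℝ) else 0)
      = (2:ℝ)^n * ((n.factorial : ℝ) * ((n-1).factorial : ℝ)) := by
  classical
  rw [sum_omega]
  have hinner : ∀ σ : Fin 2 → Equiv.Perm (Fin n),
      (∑ _b : Fin n → P2, if (Fset σ).card = 1 then (1:ℝ) else 0)
        = (2:ℝ)^n * (if (Fset σ).card = 1 then (1:ℝ) else 0) := by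
    intro σ
    rw [Finset.sum_const, card_univ]
    rw [show Fintype.card (Fin n → P2) = 2^n from by simp [Fintype.card_perm], nsmul_eq_mul]
    push_cast
    ring
  rw [Finset.sum_congr rfl fun σ _ => hinner σ, ← Finset.mul_sum]
  have hs := sum_sigma (n := n) (fun k => if k = 1 then (1:ℝ) else 0)
  have hcast : ∀ τ : Equiv.Perm (Fin n), (if (Rec τ).card = 1 then (1:ℝ) else 0)
      = (((if (Rec τ).card = 1 then 1 else 0 : ℕ)) : ℝ) := by
    intro τ; split_ifs <;> simp
  have hτ : (∑ τ : Equiv.Perm (Fin n), if (Rec τ).card = 1 then (1:ℝ) else 0)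
      = ((n-1).factorial : ℝ) := by
    rw [Finset.sum_congr rfl fun τ _ => hcast τ, ← Nat.cast_sum, count_rec_one n hn]
  rw [hs, hτ]

lemma SN_val (hn : 1 ≤ n) :
    (∑ ω : Omega 2 n, if GameSolvable ω then (GameRounds ω : ℝ) else 0)
      = 3 * (∑ ω : Omega 2 n, if GameSolvable ω then (1:ℝ) else 0)
        - (∑ ω : Omega 2 n, if ∃ c : P2, ∀ j, ω.1 j = c then (1:ℝ) else 0)
        - (∑ ω : Omega 2 n, if (Fset ω.2).card = 1 then (1:ℝ) else 0) := by
  classical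
  rw [Finset.mul_sum, ← Finset.sum_sub_distrib, ← Finset.sum_sub_distrib]
  apply Finset.sum_congr rfl
  intro ω _
  obtain ⟨hiff, hfor⟩ := main_dyn ω hn
  have e1 : (∃ i, ∀ j, fav (ω.1 j) = i) ↔ (∃ c : P2, ∀ j, ω.1 j = c) := by
    constructor
    · rintro ⟨i, h⟩
      obtain ⟨c, hc⟩ := exists_fav i
      exact ⟨c, fun j => fav_inj _ _ ((h j).trans hc.symm)⟩
    · rintro ⟨c, h⟩; exact ⟨fav c, fun j => by rw [h j]⟩
  by_cases hs : GameSolvable ω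
  · have hF := hiff.1 hs
    have h3 := hfor hF
    rw [if_pos hs, if_pos hs]
    by_cases h1 : ∃ c : P2, ∀ j, ω.1 j = c
    · by_cases h2 : (Fset ω.2).card = 1
      · rw [if_pos h1, if_pos h2]
        rw [if_pos (e1.2 h1), if_pos h2] at h3
        have hr : GameRounds ω = 1 := by omega
        rw [hr]; norm_num
      · rw [if_pos h1, if_neg h2]
        rw [if_pos (e1.2 h1), if_neg h2] at h3
        have hr : GameRounds ω = 2 := by omega
        rw [hr]; norm_num
    · by_cases h2 : (Fset ω.2).card = 1
      · rw [if_neg h1, if_pos h2]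
        rw [if_neg (fun hh => h1 (e1.1 hh)), if_pos h2] at h3
        have hr : GameRounds ω = 2 := by omega
        rw [hr]; norm_num
      · rw [if_neg h1, if_neg h2]
        rw [if_neg (fun hh => h1 (e1.1 hh)), if_neg h2] at h3
        have hr : GameRounds ω = 3 := by omega
        rw [hr]; norm_num
  · have hnF : ¬ ∃ i, ∀ j ∈ Fset ω.2, fav (ω.1 j) = i := fun h => hs (hiff.2 h)
    have h1 : ¬ ∃ c : P2, ∀ j, ω.1 j = c := by
      rintro ⟨c, h⟩
      exact hnF ⟨fav c, fun j _ => by rw [h j]⟩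
    have h2 : ¬ (Fset ω.2).card = 1 := by
      intro h
      obtain ⟨j0, hj0⟩ := Finset.card_eq_one.1 h
      refine hnF ⟨fav (ω.1 j0), ?_⟩
      intro j hj
      rw [hj0, mem_singleton] at hj
      rw [hj]
    rw [if_neg hs, if_neg hs, if_neg h1, if_neg h2]
    norm_num

end Stmt5Aux

open Stmt5Aux

/-- For every `n ≥ 1`, the expected number of elimination rounds in `G(2,n)`,
conditional on strict-dominance solvability, equals
`3 − ((n + 2^(n−1))/2^n) · √π · Γ(n)/Γ(n+1/2)`. -/
theorem stmt5 (n : ℕ) (hn : 1 ≤ n) :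
    condExpRounds 2 n
      = 3 - (((n : ℝ) + 2 ^ (n - 1)) / 2 ^ n) * Real.sqrt Real.pi *
          (Real.Gamma (n : ℝ) / Real.Gamma ((n : ℝ) + 1 / 2)) := by
  classical
  obtain ⟨m, rfl⟩ : ∃ m, n = m + 1 := ⟨n - 1, (Nat.succ_pred_eq_of_pos hn).symm⟩
  have hn' : 1 ≤ m + 1 := hn
  unfold condExpRounds
  rw [SN_val hn', SD_val hn', SA_val hn', SB_val hn']
  -- Gamma values
  have hGn : Real.Gamma ((m+1 : ℕ) : ℝ) = (m.factorial : ℝ) := by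
    rw [show (((m+1:ℕ)):ℝ) = (m:ℝ) + 1 by push_cast; ring, Real.Gamma_nat_eq_factorial]
  have hGh : Real.Gamma (((m+1:ℕ):ℝ) + 1/2)
      = Real.sqrt Real.pi * (Df (m+1) : ℝ) / 2^(m+1) := gamma_half (m+1)
  rw [hGn, hGh]
  -- set up nonzero facts
  have hfac : ((m+1).factorial : ℝ) ≠ 0 := by positivity
  have hfacm : ((m.factorial : ℝ)) ≠ 0 := by positivity
  have hDf : ((Df (m+1) : ℝ)) ≠ 0 := by
    have := Df_pos (m+1)
    positivity
  have hsqrt : Real.sqrt Real.pi ≠ 0 := ne_of_gt (Real.sqrt_pos.2 Real.pi_pos)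
  have h2p : ((2:ℝ))^(m+1) ≠ 0 := by positivity
  have hfs : ((m+1).factorial : ℝ) = ((m:ℝ)+1) * (m.factorial : ℝ) := by
    rw [Nat.factorial_succ]
    push_cast
    ring
  have hsub : m + 1 - 1 = m := by omega
  rw [hsub, hfs]
  field_simp
  push_cast
  ring
end
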